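/- arXiv:1612.09092 — 4 statements merged into one kernel-verified Lean document; each statement's English description precedes it below -/
import Mathlib

section
/- Let γ ∈ (−1,1) and let Ω be an open subset of {(x',y,t) ∈ ℝ^{n−1}×ℝ×ℝ : y > 0}. Suppose u : Ω → ℝ is three times continuously differentiable in the space variables and once in time, with continuous mixed derivative ∂_t ∂_y u, and u is L_γ-caloric on Ω, i.e. Δu + (γ/y) ∂_y u = ∂_t u on Ω. Then the function w := y^γ ∂_y u is L_{−γ}-caloric on Ω, i.e. Δw − (γ/y) ∂_y w = ∂_t w on Ω. -/
open MeasureTheory Real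

/-- Partial derivative in the `i`-th tangential (`x'`) direction for a space-time
function on `(ℝ^{n-1} × ℝ) × ℝ`, points written `((x', y), t)`. -/
noncomputable def pdxT {m : ℕ} (i : Fin m) (u : (EuclideanSpace ℝ (Fin m) × ℝ) × ℝ → ℝ)
    (p : (EuclideanSpace ℝ (Fin m) × ℝ) × ℝ) : ℝ :=
  deriv (fun s : ℝ => u ((p.1.1 + s • EuclideanSpace.single i (1 : ℝ), p.1.2), p.2)) 0

/-- Partial derivative in the `y` direction. -/
noncomputable def pdyT {m : ℕ} (u : (EuclideanSpace ℝ (Fin m) × ℝ) × ℝ → ℝ)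
    (p : (EuclideanSpace ℝ (Fin m) × ℝ) × ℝ) : ℝ :=
  deriv (fun s : ℝ => u ((p.1.1, s), p.2)) p.1.2

/-- Partial derivative in the time direction. -/
noncomputable def pdtT {m : ℕ} (u : (EuclideanSpace ℝ (Fin m) × ℝ) × ℝ → ℝ)
    (p : (EuclideanSpace ℝ (Fin m) × ℝ) × ℝ) : ℝ :=
  deriv (fun s : ℝ => u (p.1, s)) p.2

/-- Laplacian in all `n = m + 1` space variables `(x', y)` of a space-time function. -/
noncomputable def lapT {m : ℕ} (u : (EuclideanSpace ℝ (Fin m) × ℝ) × ℝ → ℝ)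
    (p : (EuclideanSpace ℝ (Fin m) × ℝ) × ℝ) : ℝ :=
  (∑ i : Fin m, pdxT i (pdxT i u) p) + pdyT (pdyT u) p

section LineDerivAux

open Filter Topology Set Asymptotics

variable {E : Type*} [NormedAddCommGroup E] [NormedSpace ℝ E]

lemma eqOn_lineDeriv {f : E → ℝ} {U : Set E} {k : WithTop ℕ∞} (hU : IsOpen U)
    (hf : ContDiffOn ℝ k f U) (hk : 1 ≤ k) (a : E) :
    Set.EqOn (fun z => lineDeriv ℝ f z a) (fun z => fderiv ℝ f z a) U :=
  fun _z hz => ((hf.differentiableOn (lt_of_lt_of_le zero_lt_one hk).ne' _ hz).differentiableAt (hU.mem_nhds hz)).lineDeriv_eq_fderiv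

lemma contDiffOn_fderiv_apply {f : E → ℝ} {U : Set E} {k m : WithTop ℕ∞} (hU : IsOpen U)
    (hf : ContDiffOn ℝ k f U) (hk : m + 1 ≤ k) (a : E) :
    ContDiffOn ℝ m (fun z => fderiv ℝ f z a) U :=
  (hf.fderiv_of_isOpen hU hk).clm_apply contDiffOn_const

lemma differentiableAt_fderiv_apply {f : E → ℝ} {U : Set E} {k : WithTop ℕ∞} (hU : IsOpen U)
    (hf : ContDiffOn ℝ k f U) (hk : 2 ≤ k) {z : E} (hz : z ∈ U) (a : E) :
    DifferentiableAt ℝ (fun w => fderiv ℝ f w a) z := by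
  have h1 : ContDiffOn ℝ 1 (fun w => fderiv ℝ f w a) U :=
    contDiffOn_fderiv_apply hU hf (by exact_mod_cast hk) a
  exact (h1.differentiableOn one_ne_zero _ hz).differentiableAt (hU.mem_nhds hz)

lemma fderiv_fderiv_apply {f : E → ℝ} {U : Set E} {k : WithTop ℕ∞} (hU : IsOpen U)
    (hf : ContDiffOn ℝ k f U) (hk : 2 ≤ k) {z : E} (hz : z ∈ U) (a b : E) :
    fderiv ℝ (fun w => fderiv ℝ f w a) z b = fderiv ℝ (fderiv ℝ f) z b a := by
  have hd : DifferentiableAt ℝ (fderiv ℝ f) z := by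
    have : ContDiffOn ℝ 1 (fderiv ℝ f) U := hf.fderiv_of_isOpen hU (by exact_mod_cast hk)
    exact (this.differentiableOn one_ne_zero _ hz).differentiableAt (hU.mem_nhds hz)
  rw [fderiv_clm_apply hd (differentiableAt_const a)]
  simp

lemma lineDeriv_lineDeriv {f : E → ℝ} {U : Set E} {k : WithTop ℕ∞} (hU : IsOpen U)
    (hf : ContDiffOn ℝ k f U) (hk : 2 ≤ k) {z : E} (hz : z ∈ U) (a b : E) :
    lineDeriv ℝ (fun w => lineDeriv ℝ f w a) z b = fderiv ℝ (fderiv ℝ f) z b a := by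
  have h1 : (fun w => lineDeriv ℝ f w a) =ᶠ[𝓝 z] (fun w => fderiv ℝ f w a) := by
    filter_upwards [hU.mem_nhds hz] with w hw
    exact eqOn_lineDeriv hU hf (le_trans (by norm_num) hk) a hw
  rw [h1.lineDeriv_eq]
  rw [(differentiableAt_fderiv_apply hU hf hk hz a).lineDeriv_eq_fderiv]
  exact fderiv_fderiv_apply hU hf hk hz a b

lemma lineDeriv_swap {f : E → ℝ} {U : Set E} {k : WithTop ℕ∞} (hU : IsOpen U)
    (hf : ContDiffOn ℝ k f U) (hk : 2 ≤ k) {z : E} (hz : z ∈ U) (a b : E) :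
    lineDeriv ℝ (fun w => lineDeriv ℝ f w a) z b
      = lineDeriv ℝ (fun w => lineDeriv ℝ f w b) z a := by
  rw [lineDeriv_lineDeriv hU hf hk hz a b, lineDeriv_lineDeriv hU hf hk hz b a]
  exact ((hf.contDiffAt (hU.mem_nhds hz)).isSymmSndFDerivAt (by simpa using hk)).eq b a

lemma lineDeriv_congrOn {f g : E → ℝ} {U : Set E} (hU : IsOpen U) (h : Set.EqOn f g U)
    {z : E} (hz : z ∈ U) (a : E) : lineDeriv ℝ f z a = lineDeriv ℝ g z a := by
  apply Filter.EventuallyEq.lineDeriv_eq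
  filter_upwards [hU.mem_nhds hz] with w hw using h hw

/-- triple swap: `D_b D_a D_a f = D_a D_a D_b f` for `f` C³ on an open set. -/
lemma lineDeriv_swap3 {f : E → ℝ} {U : Set E} (hU : IsOpen U)
    (hf : ContDiffOn ℝ 3 f U) {z : E} (hz : z ∈ U) (a b : E) :
    lineDeriv ℝ (fun w => lineDeriv ℝ (fun w' => lineDeriv ℝ f w' a) w a) z b
      = lineDeriv ℝ (fun w => lineDeriv ℝ (fun w' => lineDeriv ℝ f w' b) w a) z a := by
  set h₁ : E → ℝ := fun w => fderiv ℝ f w a with hh₁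
  set h₂ : E → ℝ := fun w => fderiv ℝ f w b with hh₂
  have h₁C : ContDiffOn ℝ 2 h₁ U := contDiffOn_fderiv_apply hU hf (by norm_num) a
  have h₂C : ContDiffOn ℝ 2 h₂ U := contDiffOn_fderiv_apply hU hf (by norm_num) b
  have e1 : Set.EqOn (fun w => lineDeriv ℝ (fun w' => lineDeriv ℝ f w' a) w a)
      (fun w => lineDeriv ℝ h₁ w a) U := fun w hw => by
    exact lineDeriv_congrOn hU (eqOn_lineDeriv hU hf (by norm_num) a) hw a
  rw [lineDeriv_congrOn hU e1 hz b, lineDeriv_swap hU h₁C le_rfl hz a b]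
  have e2 : Set.EqOn (fun w => lineDeriv ℝ h₁ w b) (fun w => lineDeriv ℝ h₂ w a) U := by
    intro w hw
    have s1 : lineDeriv ℝ h₁ w b = fderiv ℝ (fderiv ℝ f) w b a := by
      rw [(differentiableAt_fderiv_apply hU hf (by norm_num) hw a).lineDeriv_eq_fderiv]
      exact fderiv_fderiv_apply hU hf (by norm_num) hw a b
    have s2 : lineDeriv ℝ h₂ w a = fderiv ℝ (fderiv ℝ f) w a b := by
      rw [(differentiableAt_fderiv_apply hU hf (by norm_num) hw b).lineDeriv_eq_fderiv]
      exact fderiv_fderiv_apply hU hf (by norm_num) hw b a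
    show lineDeriv ℝ h₁ w b = lineDeriv ℝ h₂ w a
    rw [s1, s2]
    exact ((hf.contDiffAt (hU.mem_nhds hw)).isSymmSndFDerivAt (by norm_num)).eq b a
  rw [lineDeriv_congrOn hU e2 hz a]
  have e3 : Set.EqOn (fun w => lineDeriv ℝ h₂ w a)
      (fun w => lineDeriv ℝ (fun w' => lineDeriv ℝ f w' b) w a) U := fun w hw => by
    exact (lineDeriv_congrOn hU (eqOn_lineDeriv hU hf (by norm_num) b) hw a).symm
  rw [lineDeriv_congrOn hU e3 hz a]

end LineDerivAux

section SliceAux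

open Filter Topology Set Asymptotics

variable {E' : Type*} [NormedAddCommGroup E'] [NormedSpace ℝ E']

/-- Restriction to the vertical line through `z`: derivative at `z.2`. -/
lemma hasDerivAt_sliceY {G H : E' × ℝ → ℝ} {U : Set (E' × ℝ)} (hU : IsOpen U)
    (hEq : Set.EqOn G H U) {z : E' × ℝ} (hz : z ∈ U) (hH : DifferentiableAt ℝ H z) :
    HasDerivAt (fun s : ℝ => G (z.1, s)) (fderiv ℝ H z ((0 : E'), (1 : ℝ))) z.2 := by
  have hι : HasDerivAt (fun s : ℝ => ((z.1, s) : E' × ℝ)) (((0 : E'), (1 : ℝ))) z.2 :=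
    (hasDerivAt_const _ _).prodMk (hasDerivAt_id _)
  have base : HasDerivAt (fun s : ℝ => H (z.1, s)) (fderiv ℝ H z ((0 : E'), (1 : ℝ))) z.2 :=
    hH.hasFDerivAt.comp_hasDerivAt z.2 hι
  apply base.congr_of_eventuallyEq
  have hcont : ContinuousAt (fun s : ℝ => ((z.1, s) : E' × ℝ)) z.2 := by fun_prop
  filter_upwards [hcont.preimage_mem_nhds (hU.mem_nhds hz)] with s hs using hEq hs

/-- Restriction to a horizontal line through `z`: differentiability at `0`. -/
lemma differentiableAt_lineX {G H : E' × ℝ → ℝ} {U : Set (E' × ℝ)} (hU : IsOpen U)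
    (hEq : Set.EqOn G H U) {z : E' × ℝ} (hz : z ∈ U) (hH : DifferentiableAt ℝ H z) (e : E') :
    DifferentiableAt ℝ (fun s : ℝ => G (z.1 + s • e, z.2)) 0 := by
  have hφ : DifferentiableAt ℝ (fun s : ℝ => ((z.1 + s • e, z.2) : E' × ℝ)) 0 := by
    apply DifferentiableAt.prodMk
    · exact (differentiableAt_id.smul_const e).const_add z.1
    · exact differentiableAt_const _
  have h0 : (fun s : ℝ => ((z.1 + s • e, z.2) : E' × ℝ)) 0 = z := by simp
  have base : DifferentiableAt ℝ (fun s : ℝ => H (z.1 + s • e, z.2)) 0 := by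
    have := (h0 ▸ hH).comp 0 hφ
    exact this
  apply Filter.EventuallyEq.differentiableAt_iff ?_ |>.2 base
  have hcont : ContinuousAt (fun s : ℝ => ((z.1 + s • e, z.2) : E' × ℝ)) 0 := hφ.continuousAt
  have : ∀ᶠ s in 𝓝 (0:ℝ), ((z.1 + s • e, z.2) : E' × ℝ) ∈ U := by
    apply hcont.preimage_mem_nhds
    have : ((z.1 + (0:ℝ) • e, z.2) : E' × ℝ) = z := by simp
    rw [this]
    exact hU.mem_nhds hz
  filter_upwards [this] with s hs using hEq hs

end SliceAux

section Bridges

open Filter Topology Set Asymptotics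

lemma pdxT_eq {m : ℕ} (i : Fin m) (u : (EuclideanSpace ℝ (Fin m) × ℝ) × ℝ → ℝ)
    (p : (EuclideanSpace ℝ (Fin m) × ℝ) × ℝ) :
    pdxT i u p = lineDeriv ℝ (fun z => u (z, p.2)) p.1 (EuclideanSpace.single i 1, 0) := by
  simp only [pdxT, lineDeriv]
  congr 1
  funext s
  congr 1
  exact Prod.ext (Prod.ext rfl (by simp)) rfl

lemma pdyT_eq {m : ℕ} (u : (EuclideanSpace ℝ (Fin m) × ℝ) × ℝ → ℝ)
    (p : (EuclideanSpace ℝ (Fin m) × ℝ) × ℝ) :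
    pdyT u p = lineDeriv ℝ (fun z => u (z, p.2)) p.1 ((0 : EuclideanSpace ℝ (Fin m)), (1 : ℝ)) := by
  simp only [pdyT, lineDeriv]
  have : (fun s : ℝ => u ((p.1.1, p.1.2 + s), p.2))
      = fun s : ℝ => u (p.1 + s • ((0 : EuclideanSpace ℝ (Fin m)), (1:ℝ)), p.2) := by
    funext s; congr 1; exact Prod.ext (Prod.ext (by simp) (by simp)) rfl
  rw [← this]
  simpa using (deriv_comp_const_add (fun y => u ((p.1.1, y), p.2)) p.1.2 0).symm

lemma pdxT_eq' {m : ℕ} (i : Fin m) (u : (EuclideanSpace ℝ (Fin m) × ℝ) × ℝ → ℝ)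
    (x : EuclideanSpace ℝ (Fin m)) (y t : ℝ) :
    pdxT i u ((x, y), t)
      = lineDeriv ℝ (fun z => u (z, t)) (x, y) (EuclideanSpace.single i 1, 0) :=
  pdxT_eq i u ((x, y), t)

lemma pdyT_eq' {m : ℕ} (u : (EuclideanSpace ℝ (Fin m) × ℝ) × ℝ → ℝ)
    (x : EuclideanSpace ℝ (Fin m)) (y t : ℝ) :
    pdyT u ((x, y), t)
      = lineDeriv ℝ (fun z => u (z, t)) (x, y) ((0 : EuclideanSpace ℝ (Fin m)), (1 : ℝ)) :=
  pdyT_eq u ((x, y), t)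

lemma pdxT_fun_eq {m : ℕ} (i : Fin m) (u : (EuclideanSpace ℝ (Fin m) × ℝ) × ℝ → ℝ) (t : ℝ) :
    (fun z => pdxT i u (z, t))
      = fun z => lineDeriv ℝ (fun z' => u (z', t)) z (EuclideanSpace.single i 1, 0) :=
  funext fun z => pdxT_eq i u (z, t)

lemma pdyT_fun_eq {m : ℕ} (u : (EuclideanSpace ℝ (Fin m) × ℝ) × ℝ → ℝ) (t : ℝ) :
    (fun z => pdyT u (z, t))
      = fun z => lineDeriv ℝ (fun z' => u (z', t)) z ((0 : EuclideanSpace ℝ (Fin m)), (1 : ℝ)) :=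
  funext fun z => pdyT_eq u (z, t)

end Bridges

section Schwarz

open Filter Topology Set Asymptotics

/-- Schwarz-type lemma: `∂_y ∂_t u = ∂_t ∂_y u` given existence of `∂_y u`, `∂_t u`,
`∂_t ∂_y u` on an open set and continuity of the latter. -/
lemma mixed_swap {m : ℕ} {u : (EuclideanSpace ℝ (Fin m) × ℝ) × ℝ → ℝ}
    {Ω : Set ((EuclideanSpace ℝ (Fin m) × ℝ) × ℝ)} (hΩ : IsOpen Ω)
    (hy : ∀ q ∈ Ω, DifferentiableAt ℝ (fun s : ℝ => u ((q.1.1, s), q.2)) q.1.2)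
    (ht : ∀ q ∈ Ω, DifferentiableAt ℝ (fun r : ℝ => u (q.1, r)) q.2)
    (hm : ∀ q ∈ Ω, DifferentiableAt ℝ (fun r : ℝ => pdyT u (q.1, r)) q.2)
    (hmc : ContinuousOn (pdtT (pdyT u)) Ω)
    {p : (EuclideanSpace ℝ (Fin m) × ℝ) × ℝ} (hp : p ∈ Ω) :
    HasDerivAt (fun s : ℝ => pdtT u ((p.1.1, s), p.2)) (pdtT (pdyT u) p) p.1.2 := by
  obtain ⟨⟨x, y⟩, t⟩ := p
  set L : ℝ := pdtT (pdyT u) ((x, y), t) with hL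
  rw [hasDerivAt_iff_isLittleO, Asymptotics.isLittleO_iff]
  intro ε hε
  -- choose a good square neighborhood
  have hc : ContinuousAt (pdtT (pdyT u)) ((x, y), t) := hmc.continuousAt (hΩ.mem_nhds hp)
  obtain ⟨δ₀, hδ₀, hball⟩ := Metric.continuousAt_iff.1 hc ε hε
  obtain ⟨δ₁, hδ₁, hsub⟩ := Metric.isOpen_iff.1 hΩ _ hp
  set δ : ℝ := min δ₀ δ₁ / 2 with hδdef
  have hδ : 0 < δ := by positivity
  have hdistle : ∀ σ r : ℝ, |σ - y| ≤ δ → |r - t| ≤ δ →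
      dist (((x, σ), r) : (EuclideanSpace ℝ (Fin m) × ℝ) × ℝ) ((x, y), t) ≤ δ := by
    intro σ r h1 h2
    rw [Prod.dist_eq, Prod.dist_eq]
    simp only [dist_self, Real.dist_eq]
    exact max_le (max_le hδ.le h1) h2
  have hmem : ∀ σ r : ℝ, |σ - y| ≤ δ → |r - t| ≤ δ → ((x, σ), r) ∈ Ω := by
    intro σ r h1 h2
    apply hsub
    rw [Metric.mem_ball]
    exact lt_of_le_of_lt (hdistle σ r h1 h2)
      (lt_of_lt_of_le (by rw [hδdef]; linarith [lt_min_iff.2 ⟨hδ₀, hδ₁⟩]) (min_le_right δ₀ δ₁))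
  have hclose : ∀ σ r : ℝ, |σ - y| ≤ δ → |r - t| ≤ δ →
      |pdtT (pdyT u) ((x, σ), r) - L| ≤ ε := by
    intro σ r h1 h2
    have : dist (((x, σ), r) : (EuclideanSpace ℝ (Fin m) × ℝ) × ℝ) ((x, y), t) < δ₀ :=
      lt_of_le_of_lt (hdistle σ r h1 h2)
        (lt_of_lt_of_le (by rw [hδdef]; linarith [lt_min_iff.2 ⟨hδ₀, hδ₁⟩]) (min_le_left δ₀ δ₁))
    have := hball this
    rw [Real.dist_eq] at this
    exact this.le
  -- the inner MVT bound in the time direction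
  have inner : ∀ σ : ℝ, |σ - y| ≤ δ → ∀ k : ℝ, |k| ≤ δ →
      |(pdyT u ((x, σ), t + k) - pdyT u ((x, σ), t)) - L * k| ≤ ε * |k| := by
    intro σ hσ k hk
    set ρ : ℝ → ℝ := fun r => pdyT u ((x, σ), r) - L * r with hρ
    have hder : ∀ r ∈ Metric.closedBall t δ,
        HasDerivWithinAt ρ (pdtT (pdyT u) ((x, σ), r) - L) (Metric.closedBall t δ) r := by
      intro r hr
      rw [Metric.mem_closedBall, Real.dist_eq] at hr
      have h1 : HasDerivAt (fun r' : ℝ => pdyT u ((x, σ), r')) (pdtT (pdyT u) ((x, σ), r)) r :=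
        (hm _ (hmem σ r hσ hr)).hasDerivAt
      have h2 : HasDerivAt (fun r' : ℝ => L * r') L r := by
        simpa using (hasDerivAt_id r).const_mul L
      exact (h1.sub h2).hasDerivWithinAt
    have hbound : ∀ r ∈ Metric.closedBall t δ, ‖pdtT (pdyT u) ((x, σ), r) - L‖ ≤ ε := by
      intro r hr
      rw [Metric.mem_closedBall, Real.dist_eq] at hr
      exact hclose σ r hσ hr
    have hmem2 : t + k ∈ Metric.closedBall t δ := by
      rw [Metric.mem_closedBall, Real.dist_eq]; simpa using hk
    have hmvt := (convex_closedBall t δ).norm_image_sub_le_of_norm_hasDerivWithin_le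
      hder hbound (Metric.mem_closedBall_self hδ.le) hmem2
    simp only [hρ, Real.norm_eq_abs] at hmvt
    have heq : t + k - t = k := by ring
    rw [heq] at hmvt
    calc |(pdyT u ((x, σ), t + k) - pdyT u ((x, σ), t)) - L * k|
        = |pdyT u ((x, σ), t + k) - L * (t + k) - (pdyT u ((x, σ), t) - L * t)| := by ring_nf
      _ ≤ ε * |k| := hmvt
  -- main bound for the double difference
  have claim1 : ∀ s : ℝ, |s - y| ≤ δ → ∀ k : ℝ, |k| ≤ δ →
      |((u ((x, s), t + k) - u ((x, s), t)) - (u ((x, y), t + k) - u ((x, y), t)))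
        - (s - y) * (L * k)| ≤ ε * |k| * |s - y| := by
    intro s hs k hk
    set χ : ℝ → ℝ := fun σ => (u ((x, σ), t + k) - u ((x, σ), t)) - L * k * σ with hχ
    have hder : ∀ σ ∈ Metric.closedBall y δ,
        HasDerivWithinAt χ
          ((pdyT u ((x, σ), t + k) - pdyT u ((x, σ), t)) - L * k) (Metric.closedBall y δ) σ := by
      intro σ hσ
      rw [Metric.mem_closedBall, Real.dist_eq] at hσ
      have h1 : HasDerivAt (fun σ' : ℝ => u ((x, σ'), t + k)) (pdyT u ((x, σ), t + k)) σ :=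
        (hy _ (hmem σ (t + k) hσ (by simpa using hk))).hasDerivAt
      have h2 : HasDerivAt (fun σ' : ℝ => u ((x, σ'), t)) (pdyT u ((x, σ), t)) σ :=
        (hy _ (hmem σ t hσ (by simpa using hδ.le))).hasDerivAt
      have h3 : HasDerivAt (fun σ' : ℝ => L * k * σ') (L * k) σ := by
        simpa using (hasDerivAt_id σ).const_mul (L * k)
      exact ((h1.sub h2).sub h3).hasDerivWithinAt
    have hbound : ∀ σ ∈ Metric.closedBall y δ,
        ‖(pdyT u ((x, σ), t + k) - pdyT u ((x, σ), t)) - L * k‖ ≤ ε * |k| := by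
      intro σ hσ
      rw [Metric.mem_closedBall, Real.dist_eq] at hσ
      simpa [Real.norm_eq_abs] using inner σ hσ k hk
    have hmem2 : s ∈ Metric.closedBall y δ := by
      rw [Metric.mem_closedBall, Real.dist_eq]; exact hs
    have hmvt := (convex_closedBall y δ).norm_image_sub_le_of_norm_hasDerivWithin_le
      hder hbound (Metric.mem_closedBall_self hδ.le) hmem2
    simp only [hχ, Real.norm_eq_abs] at hmvt
    calc |((u ((x, s), t + k) - u ((x, s), t)) - (u ((x, y), t + k) - u ((x, y), t)))
          - (s - y) * (L * k)|
        = |(u ((x, s), t + k) - u ((x, s), t) - L * k * s)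
            - (u ((x, y), t + k) - u ((x, y), t) - L * k * y)| := by ring_nf
      _ ≤ ε * |k| * |s - y| := hmvt
  -- now conclude
  filter_upwards [Metric.closedBall_mem_nhds y hδ] with s hs
  rw [Metric.mem_closedBall, Real.dist_eq] at hs
  have h1 : HasDerivAt (fun r : ℝ => u ((x, s), r)) (pdtT u ((x, s), t)) t :=
    (ht _ (hmem s t hs (by simpa using hδ.le))).hasDerivAt
  have h2 : HasDerivAt (fun r : ℝ => u ((x, y), r)) (pdtT u ((x, y), t)) t :=
    (ht _ (hmem y t (by simpa using hδ.le) (by simpa using hδ.le))).hasDerivAt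
  have claim2 : Filter.Tendsto (fun k : ℝ =>
      k⁻¹ * ((u ((x, s), t + k) - u ((x, s), t)) - (u ((x, y), t + k) - u ((x, y), t))))
      (𝓝[≠] (0:ℝ)) (𝓝 (pdtT u ((x, s), t) - pdtT u ((x, y), t))) := by
    have := (h1.tendsto_slope_zero).sub (h2.tendsto_slope_zero)
    refine this.congr (fun k => ?_)
    simp only [smul_eq_mul]
    ring
  have key : |(pdtT u ((x, s), t) - pdtT u ((x, y), t)) - (s - y) * L| ≤ ε * |s - y| := by
    have htd : Filter.Tendsto (fun k : ℝ =>
        |k⁻¹ * ((u ((x, s), t + k) - u ((x, s), t)) - (u ((x, y), t + k) - u ((x, y), t)))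
          - (s - y) * L|) (𝓝[≠] (0:ℝ))
        (𝓝 (|(pdtT u ((x, s), t) - pdtT u ((x, y), t)) - (s - y) * L|)) :=
      ((claim2.sub tendsto_const_nhds).abs)
    refine le_of_tendsto htd ?_
    have hev : ∀ᶠ k in 𝓝[≠] (0:ℝ), |k| ≤ δ ∧ k ≠ 0 := by
      filter_upwards [inter_mem_nhdsWithin {(0:ℝ)}ᶜ
        (Metric.closedBall_mem_nhds (0:ℝ) hδ)] with k hk
      refine ⟨?_, hk.1⟩
      have := hk.2
      rwa [Metric.mem_closedBall, Real.dist_eq, sub_zero] at this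
    filter_upwards [hev] with k hk
    obtain ⟨hkδ, hk0⟩ := hk
    have hcl := claim1 s hs k hkδ
    have habs : |k⁻¹ * ((u ((x, s), t + k) - u ((x, s), t)) - (u ((x, y), t + k) - u ((x, y), t)))
        - (s - y) * L|
        = |k|⁻¹ * |((u ((x, s), t + k) - u ((x, s), t)) - (u ((x, y), t + k) - u ((x, y), t)))
            - (s - y) * (L * k)| := by
      rw [← abs_inv, ← abs_mul]
      congr 1
      field_simp
    rw [habs]
    calc |k|⁻¹ * |((u ((x, s), t + k) - u ((x, s), t)) - (u ((x, y), t + k) - u ((x, y), t)))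
            - (s - y) * (L * k)|
        ≤ |k|⁻¹ * (ε * |k| * |s - y|) := by
          apply mul_le_mul_of_nonneg_left hcl (by positivity)
      _ = ε * |s - y| := by
          have : |k| ≠ 0 := abs_ne_zero.2 hk0
          field_simp
  show ‖pdtT u ((x, s), t) - pdtT u ((x, y), t) - (s - y) • L‖ ≤ ε * ‖s - y‖
  rw [Real.norm_eq_abs, Real.norm_eq_abs, smul_eq_mul]
  exact key

end Schwarz
/-- if `u` is `L_γ`-caloric on an open set `Ω ⊆ {y > 0}`
(`Δu + (γ/y)∂_y u = ∂_t u`), with `u` three times continuously differentiable in the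
space variables, once in time, and with continuous mixed derivative `∂_t ∂_y u`, then
`w := y^γ ∂_y u` is `L_{−γ}`-caloric on `Ω`, i.e. `Δw − (γ/y)∂_y w = ∂_t w`. -/
theorem stmt_2 (γ : ℝ) (hγ : γ ∈ Set.Ioo (-1 : ℝ) 1) (n : ℕ) (hn : 1 ≤ n)
    (Ω : Set ((EuclideanSpace ℝ (Fin (n - 1)) × ℝ) × ℝ))
    (hΩopen : IsOpen Ω) (hΩsub : Ω ⊆ {p | 0 < p.1.2})
    (u : (EuclideanSpace ℝ (Fin (n - 1)) × ℝ) × ℝ → ℝ)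
    -- three times continuously differentiable in the space variables on Ω:
    (hspace : ∀ t : ℝ, ContDiffOn ℝ 3 (fun z : EuclideanSpace ℝ (Fin (n - 1)) × ℝ => u (z, t))
      {z | (z, t) ∈ Ω})
    -- once continuously differentiable in time on Ω:
    (htime : (∀ p ∈ Ω, DifferentiableAt ℝ (fun s : ℝ => u (p.1, s)) p.2) ∧
      ContinuousOn (pdtT u) Ω)
    -- existence and continuity of the mixed derivative ∂_t ∂_y u on Ω:
    (hmix : (∀ p ∈ Ω, DifferentiableAt ℝ (fun s : ℝ => pdyT u (p.1, s)) p.2) ∧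
      ContinuousOn (pdtT (pdyT u)) Ω)
    -- u is L_γ-caloric on Ω:
    (heq : ∀ p ∈ Ω, lapT u p + (γ / p.1.2) * pdyT u p = pdtT u p) :
    ∀ p ∈ Ω,
      lapT (fun q => q.1.2 ^ γ * pdyT u q) p
        - (γ / p.1.2) * pdyT (fun q => q.1.2 ^ γ * pdyT u q) p
        = pdtT (fun q => q.1.2 ^ γ * pdyT u q) p := by
  obtain ⟨hte, htc⟩ := htime
  obtain ⟨hme, hmc⟩ := hmix
  -- differentiability of u in the y-direction at every point of Ω
  have hyd : ∀ q ∈ Ω, DifferentiableAt ℝ (fun s : ℝ => u ((q.1.1, s), q.2)) q.1.2 := by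
    intro q hq
    have hUq : IsOpen {z : EuclideanSpace ℝ (Fin (n-1)) × ℝ | (z, q.2) ∈ Ω} :=
      IsOpen.preimage (by fun_prop) hΩopen
    have hzq : q.1 ∈ {z : EuclideanSpace ℝ (Fin (n-1)) × ℝ | (z, q.2) ∈ Ω} := by
      show (q.1, q.2) ∈ Ω; simpa using hq
    have hdq : DifferentiableAt ℝ (fun z : EuclideanSpace ℝ (Fin (n-1)) × ℝ => u (z, q.2)) q.1 :=
      ((hspace q.2).differentiableOn (by norm_num) _ hzq).differentiableAt (hUq.mem_nhds hzq)
    exact (hasDerivAt_sliceY hUq (fun _ _ => rfl) hzq hdq).differentiableAt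
  intro p hp
  obtain ⟨⟨x, y⟩, t⟩ := p
  have hy0 : (0:ℝ) < y := hΩsub hp
  -- the time slice
  set U := {z : EuclideanSpace ℝ (Fin (n-1)) × ℝ | (z, t) ∈ Ω} with hUdef
  have hU : IsOpen U := IsOpen.preimage (by fun_prop) hΩopen
  have hzU : ((x, y) : EuclideanSpace ℝ (Fin (n-1)) × ℝ) ∈ U := hp
  have hf : ContDiffOn ℝ 3 (fun z : EuclideanSpace ℝ (Fin (n-1)) × ℝ => u (z, t)) U := hspace t
  set bv := ((0 : EuclideanSpace ℝ (Fin (n-1))), (1:ℝ)) with hbvdef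
  set av := fun i : Fin (n-1) =>
    ((EuclideanSpace.single i (1:ℝ), (0:ℝ)) : EuclideanSpace ℝ (Fin (n-1)) × ℝ) with havdef
  -- spatial auxiliary functions
  set fb := fun z : EuclideanSpace ℝ (Fin (n-1)) × ℝ =>
    fderiv ℝ (fun z' : EuclideanSpace ℝ (Fin (n-1)) × ℝ => u (z', t)) z bv with hfbdef
  have hbC2 : ContDiffOn ℝ 2 fb U := contDiffOn_fderiv_apply hU hf (by norm_num) bv
  set fbb := fun z : EuclideanSpace ℝ (Fin (n-1)) × ℝ => fderiv ℝ fb z bv with hfbbdef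
  have hbbC1 : ContDiffOn ℝ 1 fbb U := contDiffOn_fderiv_apply hU hbC2 (by norm_num) bv
  have hbdiff : ∀ z ∈ U, DifferentiableAt ℝ fb z := fun z hz =>
    (hbC2.differentiableOn two_ne_zero _ hz).differentiableAt (hU.mem_nhds hz)
  have hbbdiff : ∀ z ∈ U, DifferentiableAt ℝ fbb z := fun z hz =>
    (hbbC1.differentiableOn one_ne_zero _ hz).differentiableAt (hU.mem_nhds hz)
  have E1 : Set.EqOn (fun z => pdyT u (z, t)) fb U := fun z hz =>
    (pdyT_eq u (z, t)).trans (eqOn_lineDeriv hU hf (by norm_num) bv hz)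
  have E2 : Set.EqOn (fun z => pdyT (pdyT u) (z, t)) fbb U := fun z hz =>
    (pdyT_eq (pdyT u) (z, t)).trans ((lineDeriv_congrOn hU E1 hz bv).trans
      ((hbdiff z hz).lineDeriv_eq_fderiv))
  have EA1 : ∀ i, Set.EqOn (fun z => pdxT i u (z, t))
      (fun z => fderiv ℝ (fun z' : EuclideanSpace ℝ (Fin (n-1)) × ℝ => u (z', t)) z (av i)) U :=
    fun i z hz => (pdxT_eq i u (z, t)).trans (eqOn_lineDeriv hU hf (by norm_num) (av i) hz)
  have haC2 : ∀ i, ContDiffOn ℝ 2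
      (fun z => fderiv ℝ (fun z' : EuclideanSpace ℝ (Fin (n-1)) × ℝ => u (z', t)) z (av i)) U :=
    fun i => contDiffOn_fderiv_apply hU hf (by norm_num) (av i)
  have hadiff : ∀ i, ∀ z ∈ U, DifferentiableAt ℝ
      (fun z => fderiv ℝ (fun z' : EuclideanSpace ℝ (Fin (n-1)) × ℝ => u (z', t)) z (av i)) z :=
    fun i z hz => ((haC2 i).differentiableOn two_ne_zero _ hz).differentiableAt (hU.mem_nhds hz)
  have EA2 : ∀ i, Set.EqOn (fun z => pdxT i (pdxT i u) (z, t))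
      (fun z => fderiv ℝ
        (fun z' => fderiv ℝ (fun z'' : EuclideanSpace ℝ (Fin (n-1)) × ℝ => u (z'', t)) z' (av i))
        z (av i)) U :=
    fun i z hz => (pdxT_eq i (pdxT i u) (z, t)).trans
      ((lineDeriv_congrOn hU (EA1 i) hz (av i)).trans ((hadiff i z hz).lineDeriv_eq_fderiv))
  have haaC1 : ∀ i, ContDiffOn ℝ 1
      (fun z => fderiv ℝ
        (fun z' => fderiv ℝ (fun z'' : EuclideanSpace ℝ (Fin (n-1)) × ℝ => u (z'', t)) z' (av i))
        z (av i)) U :=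
    fun i => contDiffOn_fderiv_apply hU (haC2 i) (by norm_num) (av i)
  have haadiff : ∀ i, ∀ z ∈ U, DifferentiableAt ℝ
      (fun z => fderiv ℝ
        (fun z' => fderiv ℝ (fun z'' : EuclideanSpace ℝ (Fin (n-1)) × ℝ => u (z'', t)) z' (av i))
        z (av i)) z :=
    fun i z hz => ((haaC1 i).differentiableOn one_ne_zero _ hz).differentiableAt (hU.mem_nhds hz)
  have EB : ∀ i, Set.EqOn (fun z => pdxT i (pdyT u) (z, t))
      (fun z => fderiv ℝ fb z (av i)) U :=
    fun i z hz => (pdxT_eq i (pdyT u) (z, t)).trans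
      ((lineDeriv_congrOn hU E1 hz (av i)).trans ((hbdiff z hz).lineDeriv_eq_fderiv))
  have hbaC1 : ∀ i, ContDiffOn ℝ 1 (fun z => fderiv ℝ fb z (av i)) U :=
    fun i => contDiffOn_fderiv_apply hU hbC2 (by norm_num) (av i)
  have hbadiff : ∀ i, ∀ z ∈ U, DifferentiableAt ℝ (fun z => fderiv ℝ fb z (av i)) z :=
    fun i z hz => ((hbaC1 i).differentiableOn one_ne_zero _ hz).differentiableAt (hU.mem_nhds hz)
  -- derivative facts along the vertical line
  have Y1 : ∀ s : ℝ, ((x,s),t) ∈ Ω →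
      HasDerivAt (fun σ : ℝ => pdyT u ((x,σ), t)) (pdyT (pdyT u) ((x,s),t)) s := by
    intro s hs
    have hd : DifferentiableAt ℝ (fun σ : ℝ => pdyT u ((x, σ), t)) s :=
      (hasDerivAt_sliceY hU E1 (hs : ((x,s) : EuclideanSpace ℝ (Fin (n-1)) × ℝ) ∈ U)
        (hbdiff _ hs)).differentiableAt
    exact hd.hasDerivAt
  have Y2 : ∀ s : ℝ, ((x,s),t) ∈ Ω →
      HasDerivAt (fun σ : ℝ => pdyT (pdyT u) ((x,σ), t)) (pdyT (pdyT (pdyT u)) ((x,s),t)) s := by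
    intro s hs
    have hd : DifferentiableAt ℝ (fun σ : ℝ => pdyT (pdyT u) ((x, σ), t)) s :=
      (hasDerivAt_sliceY hU E2 (hs : ((x,s) : EuclideanSpace ℝ (Fin (n-1)) × ℝ) ∈ U)
        (hbbdiff _ hs)).differentiableAt
    exact hd.hasDerivAt
  have YP : ∀ (i : Fin (n-1)) (s : ℝ), ((x,s),t) ∈ Ω →
      HasDerivAt (fun σ : ℝ => pdxT i (pdxT i u) ((x,σ), t))
        (pdyT (pdxT i (pdxT i u)) ((x,s),t)) s := by
    intro i s hs
    have hd : DifferentiableAt ℝ (fun σ : ℝ => pdxT i (pdxT i u) ((x, σ), t)) s :=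
      (hasDerivAt_sliceY hU (EA2 i) (hs : ((x,s) : EuclideanSpace ℝ (Fin (n-1)) × ℝ) ∈ U)
        (haadiff i _ hs)).differentiableAt
    exact hd.hasDerivAt
  have hev : ∀ᶠ s in nhds y, ((x, s), t) ∈ Ω := by
    have hc : ContinuousAt
        (fun s : ℝ => ((((x, s) : EuclideanSpace ℝ (Fin (n-1)) × ℝ), t))) y := by fun_prop
    exact hc.preimage_mem_nhds (hΩopen.mem_nhds hp)
  -- the differentiated equation
  have hF : HasDerivAt (fun s : ℝ => pdtT u ((x,s),t)) (pdtT (pdyT u) ((x,y),t)) y :=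
    mixed_swap hΩopen hyd hte hme hmc hp
  have hEv2 : (fun s : ℝ => lapT u ((x,s),t) + (γ / s) * pdyT u ((x,s),t)) =ᶠ[nhds y]
      (fun s : ℝ => pdtT u ((x,s),t)) := by
    filter_upwards [hev] with s hs using heq _ hs
  have hG : HasDerivAt (fun s : ℝ => lapT u ((x,s),t) + (γ / s) * pdyT u ((x,s),t))
      (pdtT (pdyT u) ((x,y),t)) y := hF.congr_of_eventuallyEq hEv2
  have hSum : HasDerivAt (fun s : ℝ => ∑ i : Fin (n-1), pdxT i (pdxT i u) ((x,s),t))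
      (∑ i : Fin (n-1), pdyT (pdxT i (pdxT i u)) ((x,y),t)) y :=
    HasDerivAt.fun_sum (fun i _ => YP i y hp)
  have hQ : HasDerivAt (fun s : ℝ => pdyT (pdyT u) ((x,s),t))
      (pdyT (pdyT (pdyT u)) ((x,y),t)) y := Y2 y hp
  have hV : HasDerivAt (fun s : ℝ => pdyT u ((x,s),t)) (pdyT (pdyT u) ((x,y),t)) y := Y1 y hp
  have hdiv : HasDerivAt (fun s : ℝ => γ / s) (γ * -(y^2)⁻¹) y :=
    (hasDerivAt_inv (ne_of_gt hy0)).const_mul γ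
  have hlap : HasDerivAt (fun s : ℝ => lapT u ((x,s),t) + (γ / s) * pdyT u ((x,s),t))
      ((∑ i : Fin (n-1), pdyT (pdxT i (pdxT i u)) ((x,y),t)) + pdyT (pdyT (pdyT u)) ((x,y),t)
        + (γ * -(y^2)⁻¹ * pdyT u ((x,y),t) + (γ / y) * pdyT (pdyT u) ((x,y),t))) y :=
    (hSum.add hQ).add (hdiv.mul hV)
  have hTeq : pdtT (pdyT u) ((x,y),t)
      = (∑ i : Fin (n-1), pdyT (pdxT i (pdxT i u)) ((x,y),t)) + pdyT (pdyT (pdyT u)) ((x,y),t)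
        + (γ * -(y^2)⁻¹ * pdyT u ((x,y),t) + (γ / y) * pdyT (pdyT u) ((x,y),t)) :=
    hG.unique hlap
  -- the spatial swaps
  have hswap : ∀ i : Fin (n-1), pdyT (pdxT i (pdxT i u)) ((x,y),t)
      = pdxT i (pdxT i (pdyT u)) ((x,y),t) := by
    intro i
    rw [pdyT_eq' (pdxT i (pdxT i u)) x y t, pdxT_eq' i (pdxT i (pdyT u)) x y t,
        pdxT_fun_eq i (pdxT i u) t, pdxT_fun_eq i u t, pdxT_fun_eq i (pdyT u) t,
        pdyT_fun_eq u t]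
    exact lineDeriv_swap3 hU hf hzU (av i) bv
  -- facts about w
  have hwt : pdtT (fun q => q.1.2 ^ γ * pdyT u q) ((x,y),t)
      = y ^ γ * pdtT (pdyT u) ((x,y),t) := by
    have hdm : DifferentiableAt ℝ (fun r : ℝ => pdyT u ((x,y), r)) t := hme _ hp
    calc pdtT (fun q => q.1.2 ^ γ * pdyT u q) ((x,y),t)
        = deriv (fun r : ℝ => y ^ γ * pdyT u ((x,y), r)) t := rfl
      _ = y ^ γ * deriv (fun r : ℝ => pdyT u ((x,y), r)) t := deriv_const_mul _ hdm
      _ = y ^ γ * pdtT (pdyT u) ((x,y),t) := rfl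
  have factP : ∀ (i : Fin (n-1)) (z : EuclideanSpace ℝ (Fin (n-1)) × ℝ), z ∈ U →
      pdxT i (fun q => q.1.2 ^ γ * pdyT u q) (z, t) = z.2 ^ γ * pdxT i (pdyT u) (z, t) := by
    intro i z hz
    have hd : DifferentiableAt ℝ
        (fun s : ℝ => pdyT u ((z.1 + s • EuclideanSpace.single i (1:ℝ), z.2), t)) 0 :=
      differentiableAt_lineX hU E1 hz (hbdiff _ hz) (EuclideanSpace.single i (1:ℝ))
    calc pdxT i (fun q => q.1.2 ^ γ * pdyT u q) (z, t)
        = deriv (fun s : ℝ =>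
            z.2 ^ γ * pdyT u ((z.1 + s • EuclideanSpace.single i (1:ℝ), z.2), t)) 0 := rfl
      _ = z.2 ^ γ * deriv (fun s : ℝ =>
            pdyT u ((z.1 + s • EuclideanSpace.single i (1:ℝ), z.2), t)) 0 := deriv_const_mul _ hd
      _ = z.2 ^ γ * pdxT i (pdyT u) (z, t) := rfl
  have hwx : ∀ i : Fin (n-1), pdxT i (pdxT i (fun q => q.1.2 ^ γ * pdyT u q)) ((x,y),t)
      = y ^ γ * pdxT i (pdxT i (pdyT u)) ((x,y),t) := by
    intro i
    have hevx : ∀ᶠ s in nhds (0:ℝ),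
        ((x + s • EuclideanSpace.single i (1:ℝ), y) : EuclideanSpace ℝ (Fin (n-1)) × ℝ) ∈ U := by
      have hφ : ContinuousAt (fun s : ℝ =>
          ((x + s • EuclideanSpace.single i (1:ℝ), y) : EuclideanSpace ℝ (Fin (n-1)) × ℝ)) 0 := by
        fun_prop
      apply hφ.preimage_mem_nhds
      have h0 : ((x + (0:ℝ) • EuclideanSpace.single i (1:ℝ), y) :
          EuclideanSpace ℝ (Fin (n-1)) × ℝ) = (x, y) := by simp
      rw [h0]
      exact hU.mem_nhds hzU
    have hEv : (fun s : ℝ => pdxT i (fun q => q.1.2 ^ γ * pdyT u q)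
          ((x + s • EuclideanSpace.single i (1:ℝ), y), t)) =ᶠ[nhds (0:ℝ)]
        (fun s : ℝ => y ^ γ * pdxT i (pdyT u) ((x + s • EuclideanSpace.single i (1:ℝ), y), t)) := by
      filter_upwards [hevx] with s hs
      exact factP i _ hs
    have hd2 : DifferentiableAt ℝ (fun s : ℝ =>
        pdxT i (pdyT u) ((x + s • EuclideanSpace.single i (1:ℝ), y), t)) 0 :=
      differentiableAt_lineX hU (EB i) hzU (hbadiff i _ hzU) (EuclideanSpace.single i (1:ℝ))
    calc pdxT i (pdxT i (fun q => q.1.2 ^ γ * pdyT u q)) ((x,y),t)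
        = deriv (fun s : ℝ => pdxT i (fun q => q.1.2 ^ γ * pdyT u q)
            ((x + s • EuclideanSpace.single i (1:ℝ), y), t)) 0 := rfl
      _ = deriv (fun s : ℝ =>
            y ^ γ * pdxT i (pdyT u) ((x + s • EuclideanSpace.single i (1:ℝ), y), t)) 0 :=
          hEv.deriv_eq
      _ = y ^ γ * deriv (fun s : ℝ =>
            pdxT i (pdyT u) ((x + s • EuclideanSpace.single i (1:ℝ), y), t)) 0 :=
          deriv_const_mul _ hd2
      _ = y ^ γ * pdxT i (pdxT i (pdyT u)) ((x,y),t) := rfl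
  have factQ : ∀ s : ℝ, ((x,s),t) ∈ Ω →
      pdyT (fun q => q.1.2 ^ γ * pdyT u q) ((x,s),t)
        = γ * s ^ (γ-1) * pdyT u ((x,s),t) + s ^ γ * pdyT (pdyT u) ((x,s),t) := by
    intro s hs
    have hs0 : (0:ℝ) < s := hΩsub hs
    have h1 : HasDerivAt (fun σ : ℝ => σ ^ γ) (γ * s ^ (γ-1)) s :=
      Real.hasDerivAt_rpow_const (Or.inl hs0.ne')
    have h2 : HasDerivAt (fun σ : ℝ => pdyT u ((x,σ),t)) (pdyT (pdyT u) ((x,s),t)) s := Y1 s hs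
    exact (h1.mul h2).deriv
  have hq2 : pdyT (pdyT (fun q => q.1.2 ^ γ * pdyT u q)) ((x,y),t)
      = γ * ((γ-1) * y ^ (γ-1-1)) * pdyT u ((x,y),t) + γ * y ^ (γ-1) * pdyT (pdyT u) ((x,y),t)
        + (γ * y ^ (γ-1) * pdyT (pdyT u) ((x,y),t) + y ^ γ * pdyT (pdyT (pdyT u)) ((x,y),t)) := by
    have hEvq : (fun s : ℝ => pdyT (fun q => q.1.2 ^ γ * pdyT u q) ((x,s),t)) =ᶠ[nhds y]
        (fun s : ℝ => γ * s ^ (γ-1) * pdyT u ((x,s),t) + s ^ γ * pdyT (pdyT u) ((x,s),t)) := by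
      filter_upwards [hev] with s hs using factQ s hs
    have hr2 : HasDerivAt (fun s : ℝ => γ * s ^ (γ-1)) (γ * ((γ-1) * y ^ (γ-1-1))) y :=
      (Real.hasDerivAt_rpow_const (Or.inl hy0.ne')).const_mul γ
    have hr1 : HasDerivAt (fun s : ℝ => s ^ γ) (γ * y ^ (γ-1)) y :=
      Real.hasDerivAt_rpow_const (Or.inl hy0.ne')
    have hA : HasDerivAt (fun s : ℝ => pdyT u ((x,s),t)) (pdyT (pdyT u) ((x,y),t)) y := Y1 y hp
    have hC : HasDerivAt (fun s : ℝ => pdyT (pdyT u) ((x,s),t))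
        (pdyT (pdyT (pdyT u)) ((x,y),t)) y := Y2 y hp
    have hcomb := (hr2.mul hA).add (hr1.mul hC)
    calc pdyT (pdyT (fun q => q.1.2 ^ γ * pdyT u q)) ((x,y),t)
        = deriv (fun s : ℝ => pdyT (fun q => q.1.2 ^ γ * pdyT u q) ((x,s),t)) y := rfl
      _ = deriv (fun s : ℝ =>
            γ * s ^ (γ-1) * pdyT u ((x,s),t) + s ^ γ * pdyT (pdyT u) ((x,s),t)) y := hEvq.deriv_eq
      _ = _ := hcomb.deriv
  -- final assembly
  show (∑ i : Fin (n-1), pdxT i (pdxT i (fun q => q.1.2 ^ γ * pdyT u q)) ((x,y),t))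
      + pdyT (pdyT (fun q => q.1.2 ^ γ * pdyT u q)) ((x,y),t)
      - (γ / y) * pdyT (fun q => q.1.2 ^ γ * pdyT u q) ((x,y),t)
      = pdtT (fun q => q.1.2 ^ γ * pdyT u q) ((x,y),t)
  rw [hwt, hq2, factQ y hp, Finset.sum_congr rfl (fun i _ => hwx i), ← Finset.mul_sum, hTeq,
      Finset.sum_congr rfl (fun i _ => hswap i)]
  have e1 : y ^ (γ-1) = y ^ γ / y := by
    rw [Real.rpow_sub hy0, Real.rpow_one]
  have e2 : y ^ (γ-1-1) = y ^ γ / y / y := by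
    rw [Real.rpow_sub hy0 (γ-1) 1, Real.rpow_one, e1]
  rw [e1, e2]
  have hyne : y ≠ 0 := ne_of_gt hy0
  field_simp
  ring
end

section
/- Let γ ∈ (−1,1), K ≥ 0 and a > 0. Let u : [0,a] → ℝ be continuous, twice continuously differentiable on (0,a), and assume that (d/dy)(y^γ u'(y)) ≤ K y^γ for every y ∈ (0,a) and that lim sup_{y → 0⁺} y^γ u'(y) ≤ 0. Then y^γ u'(y) ≤ (K/(1+γ)) y^{1+γ} for all y ∈ (0,a), and consequently u(y) − u(0) ≤ (K/(2(1+γ))) y² for all y ∈ [0,a]. -/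
open MeasureTheory Real Filter

/-- the one-dimensional "shooting back to y = 0" estimate. From
`(y^γ u')' ≤ K y^γ` on `(0,a)` and `limsup_{y→0⁺} y^γ u'(y) ≤ 0` one gets
`y^γ u'(y) ≤ (K/(1+γ)) y^{1+γ}` and `u(y) − u(0) ≤ (K/(2(1+γ))) y²`. -/
theorem stmt_11 (γ K a : ℝ) (hγ : γ ∈ Set.Ioo (-1 : ℝ) 1) (hK : 0 ≤ K) (ha : 0 < a)
    (u : ℝ → ℝ) (hu : ContinuousOn u (Set.Icc 0 a)) (hu2 : ContDiffOn ℝ 2 u (Set.Ioo 0 a))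
    (hineq : ∀ y ∈ Set.Ioo (0 : ℝ) a, deriv (fun z => z ^ γ * deriv u z) y ≤ K * y ^ γ)
    -- limsup_{y→0⁺} y^γ u'(y) ≤ 0:
    (hflux : ∀ ε > (0 : ℝ), ∀ᶠ y in nhdsWithin (0 : ℝ) (Set.Ioi 0),
      y ^ γ * deriv u y ≤ ε) :
    (∀ y ∈ Set.Ioo (0 : ℝ) a, y ^ γ * deriv u y ≤ K / (1 + γ) * y ^ (1 + γ)) ∧
    (∀ y ∈ Set.Icc (0 : ℝ) a, u y - u 0 ≤ K / (2 * (1 + γ)) * y ^ 2) := by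
  obtain ⟨hγ1, hγ2⟩ := hγ
  have hγ0 : (0:ℝ) < 1 + γ := by linarith
  set C := K / (1 + γ) with hC
  have hC0 : 0 ≤ C := div_nonneg hK hγ0.le
  have hopen : IsOpen (Set.Ioo (0:ℝ) a) := isOpen_Ioo
  have hdu : DifferentiableOn ℝ (deriv u) (Set.Ioo 0 a) := by
    have h : ContDiffOn ℝ 1 (deriv u) (Set.Ioo 0 a) :=
      hu2.deriv_of_isOpen hopen (by norm_num)
    exact h.differentiableOn (by norm_num)
  have hud : DifferentiableOn ℝ u (Set.Ioo 0 a) := hu2.differentiableOn (by norm_num)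
  set G := fun z : ℝ => z ^ γ * deriv u z - C * z ^ (1 + γ) with hGdef
  have hGdiff : ∀ y ∈ Set.Ioo (0:ℝ) a, DifferentiableAt ℝ G y := by
    intro y hy
    have hy0 : y ≠ 0 := ne_of_gt hy.1
    have h1 : DifferentiableAt ℝ (fun z : ℝ => z ^ γ) y :=
      Real.differentiableAt_rpow_const_of_ne γ hy0
    have h2 : DifferentiableAt ℝ (deriv u) y :=
      (hdu y hy).differentiableAt (hopen.mem_nhds hy)
    have h3 : DifferentiableAt ℝ (fun z : ℝ => z ^ (1+γ)) y :=
      Real.differentiableAt_rpow_const_of_ne _ hy0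
    exact (h1.mul h2).sub (h3.const_mul C)
  have hGderiv : ∀ y ∈ Set.Ioo (0:ℝ) a, deriv G y ≤ 0 := by
    intro y hy
    have hy0 : y ≠ 0 := ne_of_gt hy.1
    have h2 : DifferentiableAt ℝ (deriv u) y :=
      (hdu y hy).differentiableAt (hopen.mem_nhds hy)
    have h1 : DifferentiableAt ℝ (fun z : ℝ => z ^ γ * deriv u z) y :=
      (Real.differentiableAt_rpow_const_of_ne γ hy0).mul h2
    have h3 : DifferentiableAt ℝ (fun z : ℝ => C * z ^ (1+γ)) y :=
      (Real.differentiableAt_rpow_const_of_ne _ hy0).const_mul C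
    have hder : deriv G y = deriv (fun z : ℝ => z ^ γ * deriv u z) y
        - deriv (fun z : ℝ => C * z ^ (1+γ)) y := deriv_sub h1 h3
    have hd3 : deriv (fun z : ℝ => C * z ^ (1+γ)) y = K * y ^ γ := by
      rw [deriv_const_mul _ (Real.differentiableAt_rpow_const_of_ne _ hy0),
        Real.deriv_rpow_const, show (1:ℝ)+γ-1 = γ by ring]
      field_simp [hC]
      have hCK : C * (1 + γ) = K := by rw [hC]; exact div_mul_cancel₀ K hγ0.ne'
      linear_combination y ^ γ * hCK
    rw [hder, hd3]
    linarith [hineq y hy]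
  have hanti : AntitoneOn G (Set.Ioo 0 a) := by
    apply antitoneOn_of_deriv_nonpos (convex_Ioo 0 a)
    · exact fun y hy => (hGdiff y hy).continuousAt.continuousWithinAt
    · rw [interior_Ioo]; exact fun y hy => (hGdiff y hy).differentiableWithinAt
    · rw [interior_Ioo]; exact hGderiv
  have hGle : ∀ y ∈ Set.Ioo (0:ℝ) a, G y ≤ 0 := by
    intro y hy
    have : ∀ ε > (0:ℝ), G y ≤ 0 + ε := by
      intro ε hε
      have hmem : Set.Ioo (0:ℝ) y ∈ nhdsWithin (0:ℝ) (Set.Ioi 0) :=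
        Ioo_mem_nhdsGT_of_mem ⟨le_refl 0, hy.1⟩
      obtain ⟨z, hz1, hz2⟩ := ((hflux ε hε).and (eventually_of_mem hmem (fun z hz => hz))).exists
      have hz3 : z ∈ Set.Ioo (0:ℝ) a := ⟨hz2.1, hz2.2.trans hy.2⟩
      have hGz : G z ≤ ε := by
        have : 0 ≤ C * z ^ (1+γ) :=
          mul_nonneg hC0 (Real.rpow_nonneg hz2.1.le _)
        simp only [hGdef]; linarith
      have := hanti hz3 hy hz2.2.le
      linarith
    linarith [le_of_forall_pos_le_add this]
  have part1 : ∀ y ∈ Set.Ioo (0:ℝ) a, y ^ γ * deriv u y ≤ K / (1 + γ) * y ^ (1 + γ) := by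
    intro y hy
    have := hGle y hy
    simp only [hGdef] at this
    linarith
  refine ⟨part1, ?_⟩
  -- u' ≤ C y on (0,a)
  have hu' : ∀ y ∈ Set.Ioo (0:ℝ) a, deriv u y ≤ C * y := by
    intro y hy
    have hyp : (0:ℝ) < y ^ γ := Real.rpow_pos_of_pos hy.1 γ
    have h1 := part1 y hy
    have h2 : y ^ ((1:ℝ) + γ) = y * y ^ γ := by
      rw [Real.rpow_add hy.1, Real.rpow_one]
    rw [h2] at h1
    have : y ^ γ * deriv u y ≤ y ^ γ * (C * y) := by rw [← hC] at h1; nlinarith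
    exact le_of_mul_le_mul_left this hyp
  set H := fun z : ℝ => u z - C/2 * z^2 with hHdef
  have hHanti : AntitoneOn H (Set.Icc 0 a) := by
    apply antitoneOn_of_deriv_nonpos (convex_Icc 0 a)
    · exact hu.sub ((continuous_const.mul (continuous_pow 2)).continuousOn)
    · rw [interior_Icc]
      intro y hy
      exact ((hud y hy).differentiableAt (hopen.mem_nhds hy)).sub
        (differentiable_const _ |>.mul (differentiable_pow 2) |>.differentiableAt)
        |>.differentiableWithinAt
    · rw [interior_Icc]
      intro y hy
      have h1 : DifferentiableAt ℝ u y := (hud y hy).differentiableAt (hopen.mem_nhds hy)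
      have h2 : DifferentiableAt ℝ (fun z : ℝ => C/2 * z^2) y :=
        (differentiable_const _ |>.mul (differentiable_pow 2)).differentiableAt
      have hder : deriv H y = deriv u y - deriv (fun z : ℝ => C/2 * z^2) y :=
        deriv_sub h1 h2
      have hd2 : deriv (fun z : ℝ => C/2 * z^2) y = C * y := by
        rw [deriv_const_mul _ (differentiable_pow 2).differentiableAt, deriv_pow_field]
        ring
      rw [hder, hd2]
      linarith [hu' y hy]
  intro y hy
  have h0 : (0:ℝ) ∈ Set.Icc (0:ℝ) a := ⟨le_refl 0, ha.le⟩
  have := hHanti h0 hy hy.1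
  simp only [hHdef] at this
  have hfin : u y - u 0 ≤ C/2 * y^2 := by nlinarith
  have : C/2 = K / (2 * (1+γ)) := by rw [hC, div_div, mul_comm]
  linarith [hfin, mul_le_mul_of_nonneg_right (le_of_eq this) (sq_nonneg y)]
end

section
/- For every γ ∈ (−1,1) there exists a function h : [0,∞) → ℝ which is continuous on [0,∞), twice continuously differentiable on (0,∞), positive and bounded on [0,∞), satisfies h(0) = 1, and solves the ordinary differential equation h''(z) + (γ/z + 1) h'(z) + (γ/(2z)) h(z) = 0 for every z > 0. -/
open MeasureTheory Real
noncomputable def Kf (ν b z s : ℝ) : ℝ := Real.exp (-s) * s ^ (-ν) * (z + s) ^ b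

noncomputable def Jf (ν b z : ℝ) : ℝ := ∫ s in Set.Ioi (0:ℝ), Kf ν b z s

lemma gamma_int {a : ℝ} (ha : -1 < a) :
    IntegrableOn (fun s : ℝ => Real.exp (-s) * s ^ a) (Set.Ioi 0) := by
  have := Real.GammaIntegral_convergent (show 0 < a + 1 by linarith)
  simpa using this

lemma contOn_aux {z : ℝ} (c b : ℝ) (hz : 0 ≤ z) :
    ContinuousOn (fun s : ℝ => Real.exp (-s) * s ^ c * (z + s) ^ b) (Set.Ioi 0) := by
  refine ContinuousOn.mul (ContinuousOn.mul ?_ ?_) ?_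
  · exact (Real.continuous_exp.comp continuous_neg).continuousOn
  · exact continuousOn_id.rpow_const (fun x hx => Or.inl (ne_of_gt hx))
  · exact (continuous_const.add continuous_id).continuousOn.rpow_const
      (fun x hx => Or.inl (by have : (0:ℝ) < x := hx; exact (by linarith : (0:ℝ) < z + x).ne'))

lemma meas_aux {z : ℝ} (c b : ℝ) (hz : 0 ≤ z) :
    AEStronglyMeasurable (fun s : ℝ => Real.exp (-s) * s ^ c * (z + s) ^ b)
      (volume.restrict (Set.Ioi 0)) :=
  (contOn_aux c b hz).aestronglyMeasurable measurableSet_Ioi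

lemma key_ineq {z b s : ℝ} (hz : 0 ≤ z) (hs : 0 < s) (hb : b ≤ 1) :
    (z + s) ^ b ≤ s ^ b + (z + 1) * (1 + s) := by
  rcases le_or_gt b 0 with h | h
  · have h1 : (z + s) ^ b ≤ s ^ b := Real.rpow_le_rpow_of_nonpos hs (by linarith) h
    nlinarith [mul_nonneg (by linarith : (0:ℝ) ≤ z + 1) (by linarith : (0:ℝ) ≤ 1 + s)]
  · have hzs : 0 < z + s := by linarith
    have h2 : (z + s) ^ b ≤ 1 + (z + s) := by
      rcases le_or_gt (z + s) 1 with h2 | h2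
      · have := Real.rpow_le_one hzs.le h2 h.le; linarith
      · have := Real.rpow_le_rpow_of_exponent_le h2.le hb
        rw [Real.rpow_one] at this; linarith
    nlinarith [Real.rpow_nonneg hs.le b, mul_nonneg hz hs.le]

lemma key_ineq' {z b s : ℝ} (hz : 0 < z) (hs : 0 < s) (hb : b ≤ 1) :
    (z + s) ^ b ≤ z ^ b + (z + 1) * (1 + s) := by
  rcases le_or_gt b 0 with h | h
  · have h1 : (z + s) ^ b ≤ z ^ b := Real.rpow_le_rpow_of_nonpos hz (by linarith) h
    nlinarith [mul_nonneg (by linarith : (0:ℝ) ≤ z + 1) (by linarith : (0:ℝ) ≤ 1 + s)]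
  · have hzs : 0 < z + s := by linarith
    have h2 : (z + s) ^ b ≤ 1 + (z + s) := by
      rcases le_or_gt (z + s) 1 with h2 | h2
      · have := Real.rpow_le_one hzs.le h2 h.le; linarith
      · have := Real.rpow_le_rpow_of_exponent_le h2.le hb
        rw [Real.rpow_one] at this; linarith
    nlinarith [Real.rpow_nonneg hz.le b, mul_nonneg hz.le hs.le]

lemma intOn_pos {z a b : ℝ} (hz : 0 < z) (ha : -1 < a) (hb : b ≤ 1) :
    IntegrableOn (fun s : ℝ => Real.exp (-s) * s ^ a * (z + s) ^ b) (Set.Ioi 0) := by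
  have hbd : IntegrableOn
      (fun s : ℝ => (z ^ b + (z + 1)) * (Real.exp (-s) * s ^ a)
        + (z + 1) * (Real.exp (-s) * s ^ (a + 1))) (Set.Ioi 0) :=
    (((gamma_int ha).const_mul _).add (((gamma_int (by linarith : (-1:ℝ) < a + 1)).const_mul _)))
  refine Integrable.mono' hbd (meas_aux a b hz.le) ?_
  filter_upwards [ae_restrict_mem measurableSet_Ioi] with s hs
  have hs' : (0:ℝ) < s := hs
  have h1 : (z + s) ^ b ≤ z ^ b + (z + 1) * (1 + s) := key_ineq' hz hs' hb
  have hsa : (0:ℝ) ≤ s ^ a := Real.rpow_nonneg hs'.le a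
  have he : (0:ℝ) < Real.exp (-s) := Real.exp_pos _
  have hzs : (0:ℝ) < z + s := by linarith
  have habs : ‖Real.exp (-s) * s ^ a * (z + s) ^ b‖ = Real.exp (-s) * s ^ a * (z + s) ^ b := by
    rw [Real.norm_eq_abs, abs_of_nonneg]
    positivity
  rw [habs, Real.rpow_add_one hs'.ne' a]
  nlinarith [mul_le_mul_of_nonneg_left h1 (mul_nonneg he.le hsa),
    Real.rpow_nonneg hz.le b]

lemma intOn_nonneg {z a b : ℝ} (hz : 0 ≤ z) (ha : -1 < a) (hab : -1 < a + b) (hb : b ≤ 1) :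
    IntegrableOn (fun s : ℝ => Real.exp (-s) * s ^ a * (z + s) ^ b) (Set.Ioi 0) := by
  have hbd : IntegrableOn
      (fun s : ℝ => Real.exp (-s) * s ^ (a + b) + ((z + 1) * (Real.exp (-s) * s ^ a)
        + (z + 1) * (Real.exp (-s) * s ^ (a + 1)))) (Set.Ioi 0) :=
    (gamma_int hab).add (((gamma_int ha).const_mul _).add
      ((gamma_int (by linarith : (-1:ℝ) < a + 1)).const_mul _))
  refine Integrable.mono' hbd (meas_aux a b hz) ?_
  filter_upwards [ae_restrict_mem measurableSet_Ioi] with s hs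
  have hs' : (0:ℝ) < s := hs
  have h1 : (z + s) ^ b ≤ s ^ b + (z + 1) * (1 + s) := key_ineq hz hs' hb
  have hsa : (0:ℝ) ≤ s ^ a := Real.rpow_nonneg hs'.le a
  have he : (0:ℝ) < Real.exp (-s) := Real.exp_pos _
  have hzs : (0:ℝ) < z + s := by linarith
  have habs : ‖Real.exp (-s) * s ^ a * (z + s) ^ b‖ = Real.exp (-s) * s ^ a * (z + s) ^ b := by
    rw [Real.norm_eq_abs, abs_of_nonneg]; positivity
  rw [habs, Real.rpow_add_one hs'.ne' a]
  have h2 : s ^ (a + b) = s ^ a * s ^ b := Real.rpow_add hs' a b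
  nlinarith [mul_le_mul_of_nonneg_left h1 (mul_nonneg he.le hsa),
    Real.rpow_nonneg hs'.le b]

lemma hasDerivAt_Jf {ν b z : ℝ} (hν : -1 < -ν) (hb : b ≤ 1) (hz : 0 < z) :
    HasDerivAt (Jf ν b) (b * Jf ν (b - 1) z) z := by
  have hz2 : 0 < z / 2 := by linarith
  have key := hasDerivAt_integral_of_dominated_loc_of_deriv_le (μ := volume.restrict (Set.Ioi 0))
    (F := fun x s => Kf ν b x s) (F' := fun x s => b * Kf ν (b - 1) x s)
    (bound := fun s => |b| * (Real.exp (-s) * s ^ (-ν) * (z / 2 + s) ^ (b - 1)))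
    (x₀ := z) (s := Metric.ball z (z / 2)) (Metric.ball_mem_nhds z hz2) ?_ ?_ ?_ ?_ ?_ ?_
  · have h2 : (∫ s in Set.Ioi (0:ℝ), b * Kf ν (b - 1) z s) = b * Jf ν (b - 1) z := by
      rw [Jf, MeasureTheory.integral_const_mul]
    rw [h2] at key
    exact key.2
  · filter_upwards [eventually_gt_nhds hz] with x hx
    exact meas_aux (-ν) b hx.le
  · exact intOn_pos hz hν hb
  · exact (meas_aux (-ν) (b - 1) hz.le).const_mul b
  · filter_upwards [ae_restrict_mem measurableSet_Ioi] with s hs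
    intro x hx
    have hs' : (0:ℝ) < s := hs
    have hxz : z / 2 < x := by
      have := abs_lt.mp (mem_ball_iff_norm.mp hx)
      linarith [this.1]
    have hxs : (0:ℝ) < x + s := by linarith
    have h1 : (x + s) ^ (b - 1) ≤ (z / 2 + s) ^ (b - 1) :=
      Real.rpow_le_rpow_of_nonpos (by linarith) (by linarith) (by linarith)
    have he : (0:ℝ) < Real.exp (-s) := Real.exp_pos _
    have hsa : (0:ℝ) ≤ s ^ (-ν) := Real.rpow_nonneg hs'.le _
    have : ‖b * Kf ν (b - 1) x s‖ = |b| * (Real.exp (-s) * s ^ (-ν) * (x + s) ^ (b - 1)) := by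
      rw [norm_mul, Real.norm_eq_abs, Real.norm_eq_abs, Kf,
        abs_of_nonneg (mul_nonneg (mul_nonneg he.le hsa) (Real.rpow_nonneg hxs.le _))]
    rw [this]
    have := mul_le_mul_of_nonneg_left h1 (mul_nonneg he.le hsa)
    nlinarith [abs_nonneg b]
  · exact ((intOn_pos hz2 hν (by linarith)).const_mul _)
  · filter_upwards [ae_restrict_mem measurableSet_Ioi] with s hs
    intro x hx
    have hs' : (0:ℝ) < s := hs
    have hxz : z / 2 < x := by
      have := abs_lt.mp (mem_ball_iff_norm.mp hx)
      linarith [this.1]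
    have hxs : (0:ℝ) < x + s := by linarith
    have hd := ((hasDerivAt_id x).add_const s).rpow_const (p := b) (Or.inl hxs.ne')
    have := hd.const_mul (Real.exp (-s) * s ^ (-ν))
    refine this.congr_deriv ?_
    simp only [Kf, id]
    ring

lemma intOn_Kf {ν b z : ℝ} (hν : -1 < -ν) (hb : b ≤ 1) (hz : 0 < z) :
    IntegrableOn (fun s => Kf ν b z s) (Set.Ioi 0) := intOn_pos hz hν hb

lemma ibp {ν z : ℝ} (hν1 : -(1:ℝ)/2 < ν) (hν2 : ν < 1/2) (hz : 0 < z) :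
    -Jf ν (-ν) z + (z - 2*ν) * Jf ν (-ν-1) z + (ν+1) * z * Jf ν (-ν-2) z = 0 := by
  have hν : (-1:ℝ) < -ν := by linarith
  set F : ℝ → ℝ := fun s => Real.exp (-s) * s ^ (1-ν) * (z+s) ^ (-ν-1) with hF
  set F' : ℝ → ℝ := fun s =>
    -(Kf ν (-ν) z s) + (z - 2*ν) * Kf ν (-ν-1) z s + ((ν+1) * z) * Kf ν (-ν-2) z s with hF'
  have i1 : IntegrableOn (fun s => Kf ν (-ν) z s) (Set.Ioi 0) := intOn_Kf hν (by linarith) hz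
  have i2 : IntegrableOn (fun s => Kf ν (-ν-1) z s) (Set.Ioi 0) := intOn_Kf hν (by linarith) hz
  have i3 : IntegrableOn (fun s => Kf ν (-ν-2) z s) (Set.Ioi 0) := intOn_Kf hν (by linarith) hz
  have iF' : IntegrableOn F' (Set.Ioi 0) :=
    ((i1.neg).add (i2.const_mul _)).add (i3.const_mul _)
  -- derivative of F on Ioi 0
  have hderiv : ∀ s ∈ Set.Ioi (0:ℝ), HasDerivAt F (F' s) s := by
    intro s hs
    have hs' : (0:ℝ) < s := hs
    have hu : (0:ℝ) < z + s := by linarith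
    have hE : HasDerivAt (fun s : ℝ => Real.exp (-s)) (Real.exp (-s) * (-1)) s :=
      (hasDerivAt_neg s).exp
    have hP : HasDerivAt (fun s : ℝ => s ^ (1-ν)) ((1-ν) * s ^ (1-ν-1)) s :=
      Real.hasDerivAt_rpow_const (Or.inl hs'.ne')
    have hQ := ((hasDerivAt_id s).const_add z).rpow_const (p := -ν-1) (Or.inl hu.ne')
    have hd := (hE.mul hP).mul hQ
    refine hd.congr_deriv ?_
    simp only [hF', Kf, id, Pi.mul_apply]
    have e5 : (z+s) ^ (-ν-1-1) = (z+s) ^ (-ν-2) := by congr 1; ring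
    have e4 : s ^ (1-ν-1) = s ^ (-ν) := by congr 1; ring
    have e3 : s ^ (1-ν) = s ^ (-ν) * s := by
      rw [← Real.rpow_add_one hs'.ne' (-ν)]; congr 1; ring
    have e2 : (z+s) ^ (-ν) = (z+s) ^ (-ν-1) * (z+s) := by
      rw [← Real.rpow_add_one hu.ne' (-ν-1)]; congr 1; ring
    have e1 : (z+s) ^ (-ν-1) = (z+s) ^ (-ν-2) * (z+s) := by
      rw [← Real.rpow_add_one hu.ne' (-ν-2)]; congr 1; ring
    rw [e5, e4, e3, e2, e1]
    ring
  -- continuity at 0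
  have hcont : ContinuousWithinAt F (Set.Ici 0) 0 := by
    apply ContinuousAt.continuousWithinAt
    have c1 : ContinuousAt (fun s : ℝ => Real.exp (-s)) 0 :=
      (Real.continuous_exp.comp continuous_neg).continuousAt
    have c2 : ContinuousAt (fun s : ℝ => s ^ (1-ν)) 0 :=
      Real.continuousAt_rpow_const 0 (1-ν) (Or.inr (by linarith))
    have c3 : ContinuousAt (fun s : ℝ => (z+s) ^ (-ν-1)) 0 := by
      apply ContinuousAt.rpow_const (by fun_prop)
      left; simpa using hz.ne'
    exact (c1.mul c2).mul c3
  -- limit at infinity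
  have htop : Filter.Tendsto F Filter.atTop (nhds 0) := by
    have hb : Filter.Tendsto (fun s : ℝ => (s ^ (1-ν) * Real.exp (-s)) * z ^ (-ν-1))
        Filter.atTop (nhds 0) := by
      have := (tendsto_rpow_mul_exp_neg_mul_atTop_nhds_zero (1-ν) 1 one_pos).mul_const
        (z ^ (-ν-1))
      simpa using this
    apply squeeze_zero' ?_ ?_ hb
    · filter_upwards [Filter.eventually_gt_atTop 0] with s hs
      have hu : (0:ℝ) < z + s := by linarith
      simp only [hF]
      positivity
    · filter_upwards [Filter.eventually_gt_atTop 0] with s hs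
      have hu : (0:ℝ) < z + s := by linarith
      have h1 : (z+s) ^ (-ν-1) ≤ z ^ (-ν-1) :=
        Real.rpow_le_rpow_of_nonpos hz (by linarith) (by linarith)
      simp only [hF]
      have h2 : (0:ℝ) ≤ Real.exp (-s) * s ^ (1-ν) :=
        mul_nonneg (Real.exp_pos _).le (Real.rpow_nonneg hs.le _)
      calc Real.exp (-s) * s ^ (1-ν) * (z+s) ^ (-ν-1)
      _ ≤ Real.exp (-s) * s ^ (1-ν) * z ^ (-ν-1) := by
        exact mul_le_mul_of_nonneg_left h1 h2
      _ = s ^ (1-ν) * Real.exp (-s) * z ^ (-ν-1) := by ring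
  have hint := MeasureTheory.integral_Ioi_of_hasDerivAt_of_tendsto hcont hderiv iF' htop
  have hF0 : F 0 = 0 := by
    simp only [hF]
    rw [Real.zero_rpow (by norm_num; linarith : (1:ℝ)-ν ≠ 0)]
    ring
  rw [hF0, sub_zero] at hint
  -- expand the integral of F'
  have hexp : ∫ s in Set.Ioi (0:ℝ), F' s
      = -Jf ν (-ν) z + (z - 2*ν) * Jf ν (-ν-1) z + (ν+1) * z * Jf ν (-ν-2) z := by
    have j1 : IntegrableOn (fun s => -(Kf ν (-ν) z s)) (Set.Ioi 0) := i1.neg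
    have j12 : IntegrableOn
        (fun s => -(Kf ν (-ν) z s) + (z - 2*ν) * Kf ν (-ν-1) z s) (Set.Ioi 0) :=
      j1.add (i2.const_mul _)
    have j3 : IntegrableOn (fun s => ((ν+1) * z) * Kf ν (-ν-2) z s) (Set.Ioi 0) :=
      i3.const_mul _
    simp only [hF']
    rw [MeasureTheory.integral_add j12 j3, MeasureTheory.integral_add j1 (i2.const_mul _),
      MeasureTheory.integral_neg, MeasureTheory.integral_const_mul,
      MeasureTheory.integral_const_mul]
    simp only [Jf]
  rw [hexp] at hint
  linarith [hint]

lemma Jf_zero {ν : ℝ} (hν2 : ν < 1/2) : Jf ν (-ν) 0 = Real.Gamma (1 - 2*ν) := by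
  rw [Jf, Real.Gamma_eq_integral (by linarith : (0:ℝ) < 1 - 2*ν)]
  apply setIntegral_congr_fun measurableSet_Ioi
  intro s hs
  have hs' : (0:ℝ) < s := hs
  simp only [Kf, zero_add]
  rw [mul_assoc, ← Real.rpow_add hs']
  congr 1
  ring

lemma Jf_cont0 {ν : ℝ} (hν1 : -(1:ℝ)/2 < ν) (hν2 : ν < 1/2) :
    ContinuousWithinAt (Jf ν (-ν)) (Set.Ici 0) 0 := by
  have hx1 : ∀ᶠ x : ℝ in nhdsWithin 0 (Set.Ici 0), x < 1 :=
    Filter.Eventually.filter_mono nhdsWithin_le_nhds (eventually_lt_nhds (by norm_num))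
  apply MeasureTheory.continuousWithinAt_of_dominated
    (bound := fun s => Real.exp (-s) * s ^ (-2*ν) + (2 * (Real.exp (-s) * s ^ (-ν))
      + 2 * (Real.exp (-s) * s ^ (1-ν))))
  · filter_upwards [self_mem_nhdsWithin] with x hx
    exact meas_aux (-ν) (-ν) hx
  · filter_upwards [self_mem_nhdsWithin, hx1] with x hx hx'
    filter_upwards [ae_restrict_mem measurableSet_Ioi] with s hs
    have hs' : (0:ℝ) < s := hs
    have hx0 : (0:ℝ) ≤ x := hx
    have hxs : (0:ℝ) < x + s := by linarith
    have h1 : (x + s) ^ (-ν) ≤ s ^ (-ν) + (x+1) * (1+s) := key_ineq hx0 hs' (by linarith)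
    have he : (0:ℝ) < Real.exp (-s) := Real.exp_pos _
    have hsa : (0:ℝ) ≤ s ^ (-ν) := Real.rpow_nonneg hs'.le _
    have habs : ‖Real.exp (-s) * s ^ (-ν) * (x + s) ^ (-ν)‖
        = Real.exp (-s) * s ^ (-ν) * (x + s) ^ (-ν) := by
      rw [Real.norm_eq_abs, abs_of_nonneg (mul_nonneg (mul_nonneg he.le hsa)
        (Real.rpow_nonneg hxs.le _))]
    simp only [Kf]
    rw [habs]
    have e1 : s ^ (-2*ν) = s ^ (-ν) * s ^ (-ν) := by
      rw [← Real.rpow_add hs']; congr 1; ring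
    have e2 : s ^ (1-ν) = s ^ (-ν) * s := by
      rw [← Real.rpow_add_one hs'.ne' (-ν)]; congr 1; ring
    rw [e1, e2]
    nlinarith [mul_le_mul_of_nonneg_left h1 (mul_nonneg he.le hsa), mul_nonneg he.le hsa,
      mul_nonneg (mul_nonneg he.le hsa) hs'.le, mul_nonneg (mul_nonneg (mul_nonneg he.le hsa) hs'.le) hx0]
  · exact (gamma_int (by linarith)).add
      (((gamma_int (by linarith)).const_mul 2).add ((gamma_int (by linarith)).const_mul 2))
  · filter_upwards [ae_restrict_mem measurableSet_Ioi] with s hs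
    have hs' : (0:ℝ) < s := hs
    apply ContinuousAt.continuousWithinAt
    have hc : ContinuousAt (fun x : ℝ => (x + s) ^ (-ν)) 0 := by
      apply ContinuousAt.rpow_const (by fun_prop)
      left; simpa using hs'.ne'
    show ContinuousAt (fun x : ℝ => Kf ν (-ν) x s) 0
    simp only [Kf]
    exact hc.const_mul (Real.exp (-s) * s ^ (-ν))

lemma Jf_pos {ν z : ℝ} (hν1 : -(1:ℝ)/2 < ν) (hν2 : ν < 1/2) (hz : 0 ≤ z) :
    0 < Jf ν (-ν) z := by
  have hint : IntegrableOn (fun s => Kf ν (-ν) z s) (Set.Ioi 0) :=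
    intOn_nonneg hz (by linarith) (by rw [show -ν + -ν = -(2*ν) by ring]; linarith) (by linarith)
  rw [Jf, setIntegral_pos_iff_support_of_nonneg_ae ?pos hint]
  case pos =>
    filter_upwards [ae_restrict_mem measurableSet_Ioi] with s hs
    have hs' : (0:ℝ) < s := hs
    have hxs : (0:ℝ) < z + s := by linarith
    simp only [Kf, Pi.zero_apply]
    positivity
  have hsub : Set.Ioi (0:ℝ) ⊆ Function.support fun s => Kf ν (-ν) z s := by
    intro s hs
    have hs' : (0:ℝ) < s := hs
    have hxs : (0:ℝ) < z + s := by linarith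
    simp only [Function.mem_support, Kf]
    positivity
  rw [Set.inter_eq_right.mpr hsub, Real.volume_Ioi]
  exact ENNReal.zero_lt_top

lemma contAt_Jf {ν b z : ℝ} (hν : -1 < -ν) (hb : b ≤ 1) (hz : 0 < z) :
    ContinuousAt (Jf ν b) z := (hasDerivAt_Jf hν hb hz).continuousAt

lemma gamma_val {a : ℝ} (ha : -1 < a) :
    ∫ s in Set.Ioi (0:ℝ), Real.exp (-s) * s ^ a = Real.Gamma (a+1) := by
  rw [Real.Gamma_eq_integral (by linarith : (0:ℝ) < a + 1)]
  apply setIntegral_congr_fun measurableSet_Ioi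
  intro s hs
  congr 1
  ring

lemma Jf_le {ν z : ℝ} (hν1 : -(1:ℝ)/2 < ν) (hν2 : ν < 1/2) (hz : 0 ≤ z) :
    Jf ν (-ν) z ≤ Real.Gamma (1-2*ν)
      + ((z+1) * Real.Gamma (1-ν) + (z+1) * Real.Gamma (2-ν)) := by
  have hint : IntegrableOn (fun s => Kf ν (-ν) z s) (Set.Ioi 0) :=
    intOn_nonneg hz (by linarith) (by rw [show -ν + -ν = -(2*ν) by ring]; linarith) (by linarith)
  have hb1 : IntegrableOn (fun s : ℝ => Real.exp (-s) * s ^ (-2*ν)) (Set.Ioi 0) :=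
    gamma_int (by linarith)
  have hb2 : IntegrableOn (fun s : ℝ => (z+1) * (Real.exp (-s) * s ^ (-ν))) (Set.Ioi 0) :=
    (gamma_int (by linarith)).const_mul _
  have hb3 : IntegrableOn (fun s : ℝ => (z+1) * (Real.exp (-s) * s ^ (1-ν))) (Set.Ioi 0) :=
    (gamma_int (by linarith)).const_mul _
  have hsum : IntegrableOn (fun s : ℝ => Real.exp (-s) * s ^ (-2*ν)
      + ((z+1) * (Real.exp (-s) * s ^ (-ν)) + (z+1) * (Real.exp (-s) * s ^ (1-ν))))
      (Set.Ioi 0) := by exact hb1.add (hb2.add hb3)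
  have step1 : Jf ν (-ν) z ≤ ∫ s in Set.Ioi (0:ℝ),
      (Real.exp (-s) * s ^ (-2*ν) + ((z+1) * (Real.exp (-s) * s ^ (-ν))
        + (z+1) * (Real.exp (-s) * s ^ (1-ν)))) := by
    rw [Jf]
    apply setIntegral_mono_on hint hsum measurableSet_Ioi
    intro s hs
    have hs' : (0:ℝ) < s := hs
    have hxs : (0:ℝ) < z + s := by linarith
    have h1 : (z + s) ^ (-ν) ≤ s ^ (-ν) + (z+1) * (1+s) := key_ineq hz hs' (by linarith)
    have he : (0:ℝ) < Real.exp (-s) := Real.exp_pos _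
    have hsa : (0:ℝ) ≤ s ^ (-ν) := Real.rpow_nonneg hs'.le _
    simp only [Kf]
    have e1 : s ^ (-2*ν) = s ^ (-ν) * s ^ (-ν) := by
      rw [← Real.rpow_add hs']; congr 1; ring
    have e2 : s ^ (1-ν) = s ^ (-ν) * s := by
      rw [← Real.rpow_add_one hs'.ne' (-ν)]; congr 1; ring
    rw [e1, e2]
    nlinarith [mul_le_mul_of_nonneg_left h1 (mul_nonneg he.le hsa)]
  have step2 : ∫ s in Set.Ioi (0:ℝ),
      (Real.exp (-s) * s ^ (-2*ν) + ((z+1) * (Real.exp (-s) * s ^ (-ν))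
        + (z+1) * (Real.exp (-s) * s ^ (1-ν))))
      = Real.Gamma (1-2*ν) + ((z+1) * Real.Gamma (1-ν) + (z+1) * Real.Gamma (2-ν)) := by
    have hb23 : IntegrableOn (fun s : ℝ => (z+1) * (Real.exp (-s) * s ^ (-ν))
        + (z+1) * (Real.exp (-s) * s ^ (1-ν))) (Set.Ioi 0) := by exact hb2.add hb3
    rw [MeasureTheory.integral_add hb1 hb23, MeasureTheory.integral_add hb2 hb3,
      MeasureTheory.integral_const_mul, MeasureTheory.integral_const_mul,
      gamma_val (by linarith : (-1:ℝ) < -2*ν), gamma_val (by linarith : (-1:ℝ) < -ν),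
      gamma_val (by linarith : (-1:ℝ) < 1-ν)]
    norm_num
    rw [show -(2*ν)+1 = 1-2*ν by ring, show -ν+1 = 1-ν by ring, show 1-ν+1 = 2-ν by ring]
  linarith [step1, step2.le, step2.ge]

/-- for every `γ ∈ (−1,1)` there is a positive bounded solution `h` on
`[0,∞)` with `h(0) = 1` of `h'' + (γ/z + 1)h' + (γ/(2z))h = 0` on `(0,∞)`. -/
theorem stmt_13 (γ : ℝ) (hγ : γ ∈ Set.Ioo (-1 : ℝ) 1) :
    ∃ h : ℝ → ℝ,
      ContinuousOn h (Set.Ici 0) ∧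
      ContDiffOn ℝ 2 h (Set.Ioi 0) ∧
      (∀ z : ℝ, 0 ≤ z → 0 < h z) ∧
      (∃ B : ℝ, ∀ z : ℝ, 0 ≤ z → h z ≤ B) ∧
      h 0 = 1 ∧
      (∀ z : ℝ, 0 < z →
        deriv (deriv h) z + (γ / z + 1) * deriv h z + (γ / (2 * z)) * h z = 0) := by
  obtain ⟨hγ1, hγ2⟩ := hγ
  set ν : ℝ := γ / 2 with hνdef
  have hν1 : -(1:ℝ)/2 < ν := by rw [hνdef]; linarith
  have hν2 : ν < 1/2 := by rw [hνdef]; linarith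
  have hν : (-1:ℝ) < -ν := by linarith
  have hΓpos : 0 < Real.Gamma (1-2*ν) := Real.Gamma_pos_of_pos (by linarith)
  set C : ℝ := (Real.Gamma (1-2*ν))⁻¹ with hCdef
  have hCpos : 0 < C := inv_pos.mpr hΓpos
  set h : ℝ → ℝ := fun z => C * (Real.exp (-z) * Jf ν (-ν) z) with hdef
  set h1 : ℝ → ℝ := fun z =>
    C * (Real.exp (-z) * (-Jf ν (-ν) z + -ν * Jf ν (-ν-1) z)) with h1def
  set h2 : ℝ → ℝ := fun z =>
    C * (Real.exp (-z) * (Jf ν (-ν) z + 2*ν * Jf ν (-ν-1) z + ν*(ν+1) * Jf ν (-ν-2) z))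
    with h2def
  -- derivatives
  have Hh1 : ∀ z : ℝ, 0 < z → HasDerivAt h (h1 z) z := by
    intro z hz
    have hE : HasDerivAt (fun z : ℝ => Real.exp (-z)) (Real.exp (-z) * (-1)) z :=
      (hasDerivAt_neg z).exp
    have hJ : HasDerivAt (Jf ν (-ν)) (-ν * Jf ν (-ν-1) z) z :=
      hasDerivAt_Jf hν (by linarith) hz
    have hd := (hE.mul hJ).const_mul C
    have : h1 z = C * (Real.exp (-z) * (-1) * Jf ν (-ν) z
        + Real.exp (-z) * (-ν * Jf ν (-ν-1) z)) := by
      rw [h1def]; ring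
    rw [this]
    exact hd
  have Hh2 : ∀ z : ℝ, 0 < z → HasDerivAt h1 (h2 z) z := by
    intro z hz
    have hE : HasDerivAt (fun z : ℝ => Real.exp (-z)) (Real.exp (-z) * (-1)) z :=
      (hasDerivAt_neg z).exp
    have hJ : HasDerivAt (Jf ν (-ν)) (-ν * Jf ν (-ν-1) z) z :=
      hasDerivAt_Jf hν (by linarith) hz
    have hJ1 : HasDerivAt (Jf ν (-ν-1)) ((-ν-1) * Jf ν (-ν-1-1) z) z :=
      hasDerivAt_Jf hν (by linarith) hz
    rw [show (-ν-1-1:ℝ) = -ν-2 by ring] at hJ1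
    have hW : HasDerivAt (fun z => -Jf ν (-ν) z + -ν * Jf ν (-ν-1) z)
        (-(-ν * Jf ν (-ν-1) z) + -ν * ((-ν-1) * Jf ν (-ν-2) z)) z :=
      (hJ.neg).add (hJ1.const_mul (-ν))
    have hd := (hE.mul hW).const_mul C
    have : h2 z = C * (Real.exp (-z) * (-1) * (-Jf ν (-ν) z + -ν * Jf ν (-ν-1) z)
        + Real.exp (-z) * (-(-ν * Jf ν (-ν-1) z) + -ν * ((-ν-1) * Jf ν (-ν-2) z))) := by
      rw [h2def]; ring
    rw [this]
    exact hd
  refine ⟨h, ?_, ?_, ?_, ?_, ?_, ?_⟩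
  · -- ContinuousOn h (Ici 0)
    intro z hz
    rcases eq_or_lt_of_le (show (0:ℝ) ≤ z from hz) with rfl | hz'
    · have := ((Real.continuous_exp.comp continuous_neg).continuousAt.continuousWithinAt.mul
        (Jf_cont0 hν1 hν2)).const_mul C
      exact this
    · exact ((Hh1 z hz').continuousAt).continuousWithinAt
  · -- ContDiffOn 2
    have hopen : IsOpen (Set.Ioi (0:ℝ)) := isOpen_Ioi
    have hEqOn1 : Set.EqOn (deriv h) h1 (Set.Ioi 0) := fun y hy => (Hh1 y hy).deriv
    have hEqOn2 : Set.EqOn (deriv h1) h2 (Set.Ioi 0) := fun y hy => (Hh2 y hy).deriv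
    have hconth2 : ContinuousOn h2 (Set.Ioi 0) := by
      intro y hy
      have hy' : (0:ℝ) < y := hy
      have c0 := contAt_Jf hν (by linarith : -ν ≤ 1) hy'
      have c1 := contAt_Jf hν (by linarith : -ν-1 ≤ 1) hy'
      have c2 := contAt_Jf hν (by linarith : -ν-2 ≤ 1) hy'
      have : ContinuousAt h2 y := by
        rw [h2def]
        exact (((Real.continuous_exp.comp continuous_neg).continuousAt.mul
          ((c0.add (c1.const_mul _)).add (c2.const_mul _))).const_mul C)
      exact this.continuousWithinAt
    rw [show (2 : WithTop ℕ∞) = 1 + 1 by norm_num]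
    rw [contDiffOn_succ_iff_deriv_of_isOpen hopen]
    refine ⟨fun y hy => ((Hh1 y hy).differentiableAt).differentiableWithinAt, by simp, ?_⟩
    apply ContDiffOn.congr _ hEqOn1
    rw [show (1 : WithTop ℕ∞) = 0 + 1 by norm_num]
    rw [contDiffOn_succ_iff_deriv_of_isOpen hopen]
    refine ⟨fun y hy => ((Hh2 y hy).differentiableAt).differentiableWithinAt, by simp, ?_⟩
    rw [contDiffOn_zero]
    exact hconth2.congr hEqOn2
  · -- positivity
    intro z hz
    have := Jf_pos hν1 hν2 hz
    rw [hdef]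
    positivity
  · -- boundedness
    refine ⟨C * (Real.Gamma (1-2*ν) + (Real.Gamma (1-ν) + Real.Gamma (2-ν))), ?_⟩
    intro z hz
    have hle := Jf_le hν1 hν2 hz
    have hJpos := Jf_pos hν1 hν2 hz
    have he1 : Real.exp (-z) ≤ 1 := Real.exp_le_one_iff.mpr (by linarith)
    have he0 : 0 < Real.exp (-z) := Real.exp_pos _
    have hez : (z+1) * Real.exp (-z) ≤ 1 := by
      have h1 : z + 1 ≤ Real.exp z := by
        have := Real.add_one_le_exp z; linarith
      have hmul : Real.exp (-z) * Real.exp z = 1 := by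
        rw [← Real.exp_add]; simp
      nlinarith [Real.exp_pos z]
    have hΓ1 : 0 < Real.Gamma (1-ν) := Real.Gamma_pos_of_pos (by linarith)
    have hΓ2 : 0 < Real.Gamma (2-ν) := Real.Gamma_pos_of_pos (by linarith)
    rw [hdef]
    have key : Real.exp (-z) * Jf ν (-ν) z
        ≤ Real.Gamma (1-2*ν) + (Real.Gamma (1-ν) + Real.Gamma (2-ν)) := by
      have step : Real.exp (-z) * Jf ν (-ν) z ≤ Real.exp (-z) * (Real.Gamma (1-2*ν)
          + ((z+1) * Real.Gamma (1-ν) + (z+1) * Real.Gamma (2-ν))) :=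
        mul_le_mul_of_nonneg_left hle he0.le
      nlinarith [mul_le_mul_of_nonneg_right hez hΓ1.le, mul_le_mul_of_nonneg_right hez hΓ2.le]
    exact mul_le_mul_of_nonneg_left key hCpos.le
  · -- h 0 = 1
    rw [hdef]
    simp only [neg_zero, Real.exp_zero, one_mul]
    rw [Jf_zero hν2, hCdef]
    exact inv_mul_cancel₀ hΓpos.ne'
  · -- the ODE
    intro z hz
    have hEq1 : deriv h z = h1 z := (Hh1 z hz).deriv
    have hEq2 : deriv (deriv h) z = h2 z := by
      have hev : deriv h =ᶠ[nhds z] h1 := by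
        filter_upwards [Ioi_mem_nhds hz] with y hy
        exact (Hh1 y hy).deriv
      rw [hev.deriv_eq]
      exact (Hh2 z hz).deriv
    rw [hEq1, hEq2]
    have hibp := ibp hν1 hν2 hz
    rw [hdef, h1def, h2def]
    have hγν : γ = 2*ν := by rw [hνdef]; ring
    rw [hγν]
    have hz' : z ≠ 0 := hz.ne'
    field_simp
    linear_combination (C * Real.exp (-z) * ν) * hibp
end

section
/- Define h : [0,∞) → ℝ by h(z) = (1/(2π)) ∫₀^{2π} e^{−(z/2)(1 − cos θ)} dθ. Then h(0) = 1, 0 < h(z) ≤ 1 for all z ≥ 0, h is twice continuously differentiable on (0,∞), and h solves the ordinary differential equation h''(z) + (1/z + 1) h'(z) + (1/(2z)) h(z) = 0 for every z > 0. -/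
open MeasureTheory Real

/-- The explicit function `h(z) = (1/2π) ∫₀^{2π} e^{−(z/2)(1−cos θ)} dθ`. -/
noncomputable def hexp (z : ℝ) : ℝ :=
  (1 / (2 * Real.pi)) * ∫ θ in (0 : ℝ)..(2 * Real.pi), Real.exp (-(z / 2) * (1 - Real.cos θ))

namespace HexpAux

noncomputable def F (n : ℕ) (z θ : ℝ) : ℝ :=
  (-((1 - Real.cos θ) / 2)) ^ n * Real.exp (-(z / 2) * (1 - Real.cos θ))

lemma contF (n : ℕ) (z : ℝ) : Continuous (F n z) := by
  unfold F; fun_prop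

lemma intF (n : ℕ) (z : ℝ) : IntervalIntegrable (F n z) volume 0 (2 * Real.pi) :=
  (contF n z).intervalIntegrable _ _

lemma u_nonneg (θ : ℝ) : 0 ≤ (1 - Real.cos θ) / 2 := by
  nlinarith [Real.cos_le_one θ]

lemma u_le_one (θ : ℝ) : (1 - Real.cos θ) / 2 ≤ 1 := by
  nlinarith [Real.neg_one_le_cos θ]

lemma hasDerivAt_F (n : ℕ) (z θ : ℝ) :
    HasDerivAt (fun z => F n z θ) (F (n + 1) z θ) z := by
  have h : HasDerivAt (fun z : ℝ => -(z / 2) * (1 - Real.cos θ))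
      (-((1 - Real.cos θ) / 2)) z := by
    have := ((hasDerivAt_id z).div_const 2).neg.mul_const (1 - Real.cos θ)
    simpa using this.congr_deriv (by ring)
  have h2 := h.exp.const_mul ((-((1 - Real.cos θ) / 2)) ^ n)
  refine h2.congr_deriv (Eq.symm ?_)
  simp only [F, pow_succ]; ring

lemma norm_F_le (n : ℕ) (z x θ : ℝ) (hx : |x - z| < 1) :
    ‖F n x θ‖ ≤ Real.exp (|z| + 1) := by
  have h1 : ‖(-((1 - Real.cos θ) / 2)) ^ n‖ ≤ 1 := by
    rw [norm_pow, norm_neg, Real.norm_of_nonneg (u_nonneg θ)]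
    exact pow_le_one₀ (u_nonneg θ) (u_le_one θ)
  have h2 : Real.exp (-(x / 2) * (1 - Real.cos θ)) ≤ Real.exp (|z| + 1) := by
    apply Real.exp_le_exp.2
    have hu0 : 0 ≤ 1 - Real.cos θ := by nlinarith [Real.cos_le_one θ]
    have hu2 : 1 - Real.cos θ ≤ 2 := by nlinarith [Real.neg_one_le_cos θ]
    have hxb : |x| ≤ |z| + 1 := by
      have := abs_sub_abs_le_abs_sub x z
      linarith [hx.le]
    calc -(x / 2) * (1 - Real.cos θ) ≤ |(-(x / 2)) * (1 - Real.cos θ)| := le_abs_self _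
      _ = (|x| / 2) * (1 - Real.cos θ) := by
          rw [abs_mul, abs_neg, abs_div, abs_of_nonneg hu0]; norm_num
      _ ≤ (|x| / 2) * 2 := by
          apply mul_le_mul_of_nonneg_left hu2 (by positivity)
      _ = |x| := by ring
      _ ≤ |z| + 1 := hxb
  calc ‖F n x θ‖ = ‖(-((1 - Real.cos θ) / 2)) ^ n‖ * Real.exp (-(x / 2) * (1 - Real.cos θ)) := by
        rw [F, norm_mul, Real.norm_of_nonneg (Real.exp_pos _).le]
    _ ≤ 1 * Real.exp (|z| + 1) := by
        exact mul_le_mul h1 h2 (Real.exp_pos _).le zero_le_one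
    _ = Real.exp (|z| + 1) := one_mul _

lemma hasDerivAt_integral (n : ℕ) (z : ℝ) :
    HasDerivAt (fun z => ∫ θ in (0:ℝ)..(2 * Real.pi), F n z θ)
      (∫ θ in (0:ℝ)..(2 * Real.pi), F (n + 1) z θ) z := by
  have := intervalIntegral.hasDerivAt_integral_of_dominated_loc_of_deriv_le
      (F := fun z θ => F n z θ) (F' := fun z θ => F (n + 1) z θ) (x₀ := z)
      (bound := fun _ => Real.exp (|z| + 1)) (a := 0) (b := 2 * Real.pi) (μ := volume)
      (s := Metric.ball z 1) (Metric.ball_mem_nhds z one_pos)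
      (Filter.Eventually.of_forall fun x => (contF n x).aestronglyMeasurable)
      (intF n z)
      (contF (n + 1) z).aestronglyMeasurable
      (Filter.Eventually.of_forall fun θ _ x hx =>
        norm_F_le (n + 1) z x θ (by simpa [Real.dist_eq] using hx))
      (intervalIntegrable_const)
      (Filter.Eventually.of_forall fun θ _ x _ => hasDerivAt_F n x θ)
  exact this.2

noncomputable def D (n : ℕ) (z : ℝ) : ℝ :=
  (1 / (2 * Real.pi)) * ∫ θ in (0:ℝ)..(2 * Real.pi), F n z θ

lemma hasDerivAt_D (n : ℕ) (z : ℝ) : HasDerivAt (D n) (D (n + 1) z) z := by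
  have := (hasDerivAt_integral n z).const_mul (1 / (2 * Real.pi))
  exact this

lemma hexp_eq_D0 : hexp = D 0 := by
  funext z
  simp [hexp, D, F]

lemma deriv_D (n : ℕ) : deriv (D n) = D (n + 1) := by
  funext z; exact (hasDerivAt_D n z).deriv

lemma contDiff_D (n : ℕ) : ContDiff ℝ 2 (D n) := by
  rw [show (2 : WithTop ℕ∞) = 1 + 1 by norm_num, contDiff_succ_iff_deriv]
  refine ⟨fun z => (hasDerivAt_D n z).differentiableAt, by simp, ?_⟩
  rw [deriv_D, show (1 : WithTop ℕ∞) = 0 + 1 by norm_num, contDiff_succ_iff_deriv]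
  refine ⟨fun z => (hasDerivAt_D (n + 1) z).differentiableAt, by simp, ?_⟩
  rw [deriv_D]
  exact contDiff_zero.2 (continuous_iff_continuousAt.2 fun z => (hasDerivAt_D (n + 2) z).continuousAt)

lemma inner_deriv (z θ : ℝ) :
    HasDerivAt (fun θ => (Real.sin θ / 2) * Real.exp (-(z / 2) * (1 - Real.cos θ)))
      (z * F 2 z θ + (z + 1) * F 1 z θ + (1 / 2) * F 0 z θ) θ := by
  have h1 : HasDerivAt (fun θ => Real.sin θ / 2) (Real.cos θ / 2) θ :=
    (Real.hasDerivAt_sin θ).div_const 2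
  have hg : HasDerivAt (fun θ : ℝ => -(z / 2) * (1 - Real.cos θ))
      (-(z / 2) * Real.sin θ) θ := by
    have := ((Real.hasDerivAt_cos θ).const_sub 1).const_mul (-(z / 2))
    simpa using this
  have h2 := h1.mul hg.exp
  refine h2.congr_deriv (Eq.symm ?_)
  simp only [F, pow_succ, pow_zero, pow_one, one_mul]
  have hsc := Real.sin_sq_add_cos_sq θ
  linear_combination (Real.exp (-(z / 2) * (1 - Real.cos θ)) * z / 4) * hsc

lemma key_integral (z : ℝ) :
    (∫ θ in (0:ℝ)..(2 * Real.pi),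
      (z * F 2 z θ + (z + 1) * F 1 z θ + (1 / 2) * F 0 z θ)) = 0 := by
  rw [intervalIntegral.integral_eq_sub_of_hasDerivAt
      (fun θ _ => inner_deriv z θ)
      (Continuous.intervalIntegrable (by
        have := contF 2 z; have := contF 1 z; have := contF 0 z; fun_prop) _ _)]
  simp [Real.sin_two_pi]

end HexpAux

open HexpAux in
/-- `h(0) = 1`, `0 < h ≤ 1` on `[0,∞)`, `h` is `C²` on `(0,∞)` and solves
`h'' + (1/z + 1)h' + (1/(2z))h = 0` for `z > 0` (the `γ = 1` case of the ODE). -/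
theorem stmt_14 :
    hexp 0 = 1 ∧
    (∀ z : ℝ, 0 ≤ z → 0 < hexp z ∧ hexp z ≤ 1) ∧
    ContDiffOn ℝ 2 hexp (Set.Ioi 0) ∧
    (∀ z : ℝ, 0 < z →
      deriv (deriv hexp) z + (1 / z + 1) * deriv hexp z + (1 / (2 * z)) * hexp z = 0) := by
  have hpi : (0:ℝ) < Real.pi := Real.pi_pos
  refine ⟨?_, ?_, ?_, ?_⟩
  · -- hexp 0 = 1
    have hπ : Real.pi ≠ 0 := Real.pi_ne_zero
    simp only [hexp]
    norm_num
    field_simp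
  · -- bounds
    intro z hz
    constructor
    · have hpos : 0 < ∫ θ in (0:ℝ)..(2 * Real.pi),
          Real.exp (-(z / 2) * (1 - Real.cos θ)) := by
        apply intervalIntegral.intervalIntegral_pos_of_pos
        · exact (Continuous.intervalIntegrable (by fun_prop) _ _)
        · intro x; exact Real.exp_pos _
        · positivity
      have : (0:ℝ) < 1 / (2 * Real.pi) := by positivity
      exact mul_pos this hpos
    · have hle : (∫ θ in (0:ℝ)..(2 * Real.pi),
          Real.exp (-(z / 2) * (1 - Real.cos θ))) ≤ ∫ _θ in (0:ℝ)..(2 * Real.pi), (1:ℝ) := by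
        apply intervalIntegral.integral_mono_on (by positivity)
          (Continuous.intervalIntegrable (by fun_prop) _ _) intervalIntegrable_const
        intro θ _
        rw [Real.exp_le_one_iff]
        have := u_nonneg θ
        nlinarith
      have h1 : (∫ _θ in (0:ℝ)..(2 * Real.pi), (1:ℝ)) = 2 * Real.pi := by simp
      rw [h1] at hle
      calc hexp z ≤ (1 / (2 * Real.pi)) * (2 * Real.pi) := by
            exact mul_le_mul_of_nonneg_left hle (by positivity)
        _ = 1 := by field_simp
  · -- C² on (0,∞)
    rw [hexp_eq_D0]
    exact (contDiff_D 0).contDiffOn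
  · -- the ODE
    intro z hz
    have h0 : hexp z = D 0 z := by rw [hexp_eq_D0]
    have h1 : deriv hexp z = D 1 z := by rw [hexp_eq_D0, deriv_D]
    have h2 : deriv (deriv hexp) z = D 2 z := by rw [hexp_eq_D0, deriv_D, deriv_D]
    rw [h0, h1, h2]
    have hk := key_integral z
    have hsplit : (∫ θ in (0:ℝ)..(2 * Real.pi),
        (z * F 2 z θ + (z + 1) * F 1 z θ + (1 / 2) * F 0 z θ)) =
        z * (∫ θ in (0:ℝ)..(2 * Real.pi), F 2 z θ) +
        (z + 1) * (∫ θ in (0:ℝ)..(2 * Real.pi), F 1 z θ) +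
        (1 / 2) * (∫ θ in (0:ℝ)..(2 * Real.pi), F 0 z θ) := by
      rw [intervalIntegral.integral_add (((intF 2 z).const_mul _).add ((intF 1 z).const_mul _))
          ((intF 0 z).const_mul _),
        intervalIntegral.integral_add ((intF 2 z).const_mul _) ((intF 1 z).const_mul _),
        intervalIntegral.integral_const_mul, intervalIntegral.integral_const_mul,
        intervalIntegral.integral_const_mul]
    rw [hsplit] at hk
    simp only [D]
    set I0 := ∫ θ in (0:ℝ)..(2 * Real.pi), F 0 z θ
    set I1 := ∫ θ in (0:ℝ)..(2 * Real.pi), F 1 z θ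
    set I2 := ∫ θ in (0:ℝ)..(2 * Real.pi), F 2 z θ
    have hz' : z ≠ 0 := ne_of_gt hz
    have hp' : Real.pi ≠ 0 := ne_of_gt hpi
    field_simp
    linear_combination 2 * hk
end
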